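/- arXiv:1507.07506 — 10 statements merged into one kernel-verified Lean document; each statement's English description precedes it below -/
import Mathlib

section
/- Let G be a SIN group and let Δ be a bounded continuous right-invariant pseudometric on G (i.e. there is C ∈ ℝ with Δ(x,y) ≤ C for all x,y ∈ G). Then there exists a continuous bi-invariant pseudometric Θ on G such that Θ(x,y) ≥ Δ(x,y) for all x,y ∈ G. -/
def IsPseudometric {X : Type*} (d : X → X → ℝ) : Prop :=
  (∀ x, d x x = 0) ∧ (∀ x y, d x y = d y x) ∧ (∀ x y, 0 ≤ d x y) ∧
    (∀ x y z, d x z ≤ d x y + d y z)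

def BLipb {X : Type*} (d : X → X → ℝ) : Set (X → ℝ) :=
  {f | (∀ x, f x ∈ Set.Icc (-1 : ℝ) 1) ∧ ∀ x y, |f x - f y| ≤ d x y}

def RightInvariant {G : Type*} [Group G] (d : G → G → ℝ) : Prop :=
  ∀ x y z : G, d (x * z) (y * z) = d x y

def LeftInvariant {G : Type*} [Group G] (d : G → G → ℝ) : Prop :=
  ∀ x y z : G, d (z * x) (z * y) = d x y

def ContPseudometric {G : Type*} [TopologicalSpace G] (d : G → G → ℝ) : Prop :=
  Continuous fun p : G × G => d p.1 p.2

def IsSIN (G : Type*) [Group G] [TopologicalSpace G] : Prop :=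
  ∀ U ∈ nhds (1 : G), ∃ (d : G → G → ℝ) (ε : ℝ), IsPseudometric d ∧
    ContPseudometric d ∧ LeftInvariant d ∧ RightInvariant d ∧ 0 < ε ∧
    {x : G | d x 1 < ε} ⊆ U

/-- In a SIN group, every bounded continuous right-invariant pseudometric
is dominated by a continuous bi-invariant pseudometric. -/
theorem exists_biinvariant_above (G : Type*) [Group G] [TopologicalSpace G]
    [IsTopologicalGroup G] [T2Space G] (hSIN : IsSIN G)
    (Δ : G → G → ℝ) (hpm : IsPseudometric Δ) (hcont : ContPseudometric Δ)
    (hri : RightInvariant Δ) (C : ℝ) (hbd : ∀ x y : G, Δ x y ≤ C) :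
    ∃ Θ : G → G → ℝ, IsPseudometric Θ ∧ ContPseudometric Θ ∧ LeftInvariant Θ ∧
      RightInvariant Θ ∧ ∀ x y : G, Δ x y ≤ Θ x y := by
  classical
  haveI : Nonempty G := ⟨1⟩
  set Θ : G → G → ℝ := fun x y => ⨆ z : G, Δ (z * x) (z * y) with hΘ
  have hbdd : ∀ x y : G, BddAbove (Set.range fun z : G => Δ (z * x) (z * y)) := by
    intro x y
    exact ⟨C, by rintro _ ⟨z, rfl⟩; exact hbd _ _⟩
  have hle : ∀ x y z : G, Δ (z * x) (z * y) ≤ Θ x y := fun x y z =>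
    le_ciSup (hbdd x y) z
  have hDΘ : ∀ x y : G, Δ x y ≤ Θ x y := fun x y => by
    simpa using hle x y 1
  have hΘle : ∀ (x y : G) (b : ℝ), (∀ z : G, Δ (z * x) (z * y) ≤ b) → Θ x y ≤ b :=
    fun x y b h => ciSup_le h
  -- pseudometric axioms
  have hrefl : ∀ x : G, Θ x x = 0 := by
    intro x
    refine le_antisymm (hΘle x x 0 fun z => le_of_eq (hpm.1 _)) ?_
    simpa [hpm.1] using hDΘ x x
  have hsymm : ∀ x y : G, Θ x y = Θ y x := fun x y =>
    iSup_congr fun z => hpm.2.1 _ _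
  have hnonneg : ∀ x y : G, 0 ≤ Θ x y := fun x y =>
    le_trans (hpm.2.2.1 x y) (hDΘ x y)
  have htri : ∀ x y z : G, Θ x z ≤ Θ x y + Θ y z := by
    intro x y z
    refine hΘle x z _ fun w => ?_
    calc Δ (w * x) (w * z) ≤ Δ (w * x) (w * y) + Δ (w * y) (w * z) :=
          hpm.2.2.2 _ _ _
      _ ≤ Θ x y + Θ y z := add_le_add (hle x y w) (hle y z w)
  -- invariance
  have hLI : LeftInvariant Θ := by
    intro x y z
    refine le_antisymm (hΘle _ _ _ fun w => ?_) (hΘle _ _ _ fun w => ?_)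
    · rw [← mul_assoc, ← mul_assoc]
      exact hle x y (w * z)
    · have := hle (z * x) (z * y) (w * z⁻¹)
      simpa [mul_assoc] using this
  have hRI : RightInvariant Θ := by
    intro x y z
    exact iSup_congr fun w => by rw [← mul_assoc, ← mul_assoc, hri]
  -- continuity
  have hcontΘ : ContPseudometric Θ := by
    rw [ContPseudometric, continuous_iff_continuousAt]
    rintro ⟨x₀, y₀⟩
    rw [ContinuousAt, Metric.tendsto_nhds]
    intro ε hε
    set ε' : ℝ := ε / 3 with hε'
    have hε'pos : 0 < ε' := by positivity
    have hU : {u : G | Δ u 1 < ε'} ∈ nhds (1 : G) := by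
      have hc : Continuous fun u : G => Δ u 1 :=
        hcont.comp (continuous_id.prodMk continuous_const)
      have : IsOpen {u : G | Δ u 1 < ε'} := isOpen_lt hc continuous_const
      refine this.mem_nhds ?_
      simp [hpm.1, hε'pos]
    obtain ⟨d, δ, hdpm, hdcont, hdl, hdr, hδpos, hdsub⟩ := hSIN _ hU
    -- key: d u v < δ → Δ u v ≤ ε'
    have key : ∀ u v : G, d u v < δ → Δ u v ≤ ε' := by
      intro u v huv
      have h1 : d (u * v⁻¹) 1 = d u v := by
        have := hdr (u * v⁻¹) 1 v
        simpa [mul_assoc] using this.symm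
      have h2 : u * v⁻¹ ∈ {x : G | d x 1 < δ} := by
        simp only [Set.mem_setOf_eq, h1]; exact huv
      have h3 : Δ (u * v⁻¹) 1 < ε' := hdsub h2
      have h4 : Δ u v = Δ (u * v⁻¹) 1 := by
        have := hri (u * v⁻¹) 1 v
        simpa [mul_assoc] using this
      linarith
    -- one-sided estimate
    have oneside : ∀ x y x' y' : G, d x x' < δ → d y y' < δ →
        Θ x y ≤ Θ x' y' + 2 * ε' := by
      intro x y x' y' hx hy
      refine hΘle x y _ fun z => ?_
      have t1 : Δ (z * x) (z * x') ≤ ε' := by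
        apply key
        rw [hdl x x' z]; exact hx
      have t3 : Δ (z * y') (z * y) ≤ ε' := by
        apply key
        rw [hdl y' y z, hdpm.2.1]; exact hy
      calc Δ (z * x) (z * y)
          ≤ Δ (z * x) (z * x') + Δ (z * x') (z * y) := hpm.2.2.2 _ _ _
        _ ≤ Δ (z * x) (z * x') + (Δ (z * x') (z * y') + Δ (z * y') (z * y)) := by
            have := hpm.2.2.2 (z * x') (z * y') (z * y)
            linarith
        _ ≤ ε' + (Θ x' y' + ε') := by
            have := hle x' y' z
            linarith
        _ = Θ x' y' + 2 * ε' := by ring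
    -- the neighbourhood
    have hdc1 : Continuous fun p : G × G => d p.1 x₀ :=
      hdcont.comp (continuous_fst.prodMk continuous_const)
    have hdc2 : Continuous fun p : G × G => d p.2 y₀ :=
      hdcont.comp (continuous_snd.prodMk continuous_const)
    have hVopen : IsOpen {p : G × G | d p.1 x₀ < δ ∧ d p.2 y₀ < δ} :=
      (isOpen_lt hdc1 continuous_const).inter (isOpen_lt hdc2 continuous_const)
    have hVmem : {p : G × G | d p.1 x₀ < δ ∧ d p.2 y₀ < δ} ∈ nhds (x₀, y₀) := by
      refine hVopen.mem_nhds ?_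
      simp [hdpm.1, hδpos]
    filter_upwards [hVmem] with p hp
    obtain ⟨hp1, hp2⟩ := hp
    have e1 : Θ p.1 p.2 ≤ Θ x₀ y₀ + 2 * ε' := oneside _ _ _ _ hp1 hp2
    have e2 : Θ x₀ y₀ ≤ Θ p.1 p.2 + 2 * ε' := by
      refine oneside _ _ _ _ ?_ ?_
      · rw [hdpm.2.1]; exact hp1
      · rw [hdpm.2.1]; exact hp2
    rw [Real.dist_eq, abs_sub_lt_iff]
    constructor <;> linarith
  exact ⟨Θ, ⟨hrefl, hsymm, hnonneg, htri⟩, hcontΘ, hLI, hRI, hDΘ⟩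
end

section
/- Let G be a SIN group and let Δ be a continuous right-invariant pseudometric on G. Then there exists a continuous bi-invariant pseudometric Θ on G such that BLip_b(Δ) ⊆ BLip_b(Θ), i.e. every function f : G → ℝ with values in [-1,1] and |f(x) − f(y)| ≤ Δ(x,y) for all x,y also satisfies |f(x) − f(y)| ≤ Θ(x,y) for all x,y. -/
lemma min_add_two {a b : ℝ} (ha : 0 ≤ a) (hb : 0 ≤ b) :
    min (a + b) 2 ≤ min a 2 + min b 2 := by
  rcases le_total (a + b) 2 with h | h
  · rw [min_eq_left h, min_eq_left (by linarith), min_eq_left (by linarith)]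
  · rw [min_eq_right h]
    rcases le_total a 2 with h1 | h1
    · rcases le_total b 2 with h2 | h2
      · rw [min_eq_left h1, min_eq_left h2]; linarith
      · rw [min_eq_right h2]; have := le_min ha (by norm_num : (0:ℝ) ≤ 2); linarith
    · rw [min_eq_right h1]; have := le_min hb (by norm_num : (0:ℝ) ≤ 2); linarith

/-- In a SIN group, for every continuous right-invariant pseudometric Δ
there is a continuous bi-invariant pseudometric Θ with BLip_b(Δ) ⊆ BLip_b(Θ). -/
theorem exists_biinvariant_blipb_subset (G : Type*) [Group G] [TopologicalSpace G]
    [IsTopologicalGroup G] [T2Space G] (hSIN : IsSIN G)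
    (Δ : G → G → ℝ) (hpm : IsPseudometric Δ) (hcont : ContPseudometric Δ)
    (hri : RightInvariant Δ) :
    ∃ Θ : G → G → ℝ, IsPseudometric Θ ∧ ContPseudometric Θ ∧ LeftInvariant Θ ∧
      RightInvariant Θ ∧ BLipb Δ ⊆ BLipb Θ := by
  classical
  obtain ⟨hrefl, hsymm, hnn, htri⟩ := hpm
  have hΔ1 : Continuous fun g : G => Δ g 1 :=
    hcont.comp (continuous_id.prodMk continuous_const)
  have hU : ∀ n : ℕ, {g : G | Δ g 1 < (2⁻¹ : ℝ) ^ n} ∈ nhds (1 : G) := by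
    intro n
    refine IsOpen.mem_nhds (isOpen_lt hΔ1 continuous_const) ?_
    simp only [Set.mem_setOf_eq, hrefl 1]
    positivity
  choose d ε hdpm hdcont hdli hdri hε hsub using fun n => hSIN _ (hU n)
  set T : ℕ → G → G → ℝ :=
    fun n x y => (2⁻¹ : ℝ) ^ n * min (2 / ε n * d n x y) 2 with hT
  have hdnn : ∀ n x y, 0 ≤ d n x y := fun n => (hdpm n).2.2.1
  have hc : ∀ n, 0 ≤ 2 / ε n := fun n => div_nonneg (by norm_num) (hε n).le
  have hTnn : ∀ n x y, 0 ≤ T n x y := by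
    intro n x y
    have h : 0 ≤ min (2 / ε n * d n x y) 2 :=
      le_min (mul_nonneg (hc n) (hdnn n x y)) (by norm_num)
    exact mul_nonneg (by positivity) h
  have hTle : ∀ n x y, T n x y ≤ (2⁻¹ : ℝ) ^ n * 2 := by
    intro n x y
    exact mul_le_mul_of_nonneg_left (min_le_right _ _) (by positivity)
  have husum : Summable fun n : ℕ => (2⁻¹ : ℝ) ^ n * 2 :=
    (summable_geometric_of_lt_one (by norm_num) (by norm_num)).mul_right 2
  have hsummable : ∀ x y, Summable fun n => T n x y := fun x y =>
    Summable.of_nonneg_of_le (fun n => hTnn n x y) (fun n => hTle n x y) husum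
  refine ⟨fun x y => ∑' n, T n x y, ⟨?_, ?_, ?_, ?_⟩, ?_, ?_, ?_, ?_⟩
  · intro x
    have : ∀ n, T n x x = 0 := by
      intro n; simp [hT, (hdpm n).1 x]
    simp [this]
  · intro x y
    exact tsum_congr fun n => by simp only [hT]; rw [(hdpm n).2.1 x y]
  · intro x y
    exact tsum_nonneg fun n => hTnn n x y
  · intro x y z
    calc ∑' n, T n x z ≤ ∑' n, (T n x y + T n y z) := by
          refine Summable.tsum_le_tsum (fun n => ?_) (hsummable x z) ((hsummable x y).add (hsummable y z))
          simp only [hT]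
          have h1 : 2 / ε n * d n x z ≤ 2 / ε n * d n x y + 2 / ε n * d n y z := by
            have := (hdpm n).2.2.2 x y z
            nlinarith [hc n]
          have h2 : min (2 / ε n * d n x z) 2
              ≤ min (2 / ε n * d n x y) 2 + min (2 / ε n * d n y z) 2 := by
            refine le_trans (min_le_min h1 le_rfl) ?_
            exact min_add_two (mul_nonneg (hc n) (hdnn n x y)) (mul_nonneg (hc n) (hdnn n y z))
          calc (2⁻¹ : ℝ) ^ n * min (2 / ε n * d n x z) 2
              ≤ (2⁻¹ : ℝ) ^ n * (min (2 / ε n * d n x y) 2 + min (2 / ε n * d n y z) 2) :=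
                mul_le_mul_of_nonneg_left h2 (by positivity)
            _ = T n x y + T n y z := by rw [hT]; ring
      _ = (∑' n, T n x y) + ∑' n, T n y z := Summable.tsum_add (hsummable x y) (hsummable y z)
  · -- continuity
    refine continuous_tsum (f := fun n (p : G × G) => T n p.1 p.2)
      (fun n => ?_) husum (fun n p => ?_)
    · exact continuous_const.mul ((continuous_const.mul (hdcont n)).min continuous_const)
    · rw [Real.norm_eq_abs, abs_of_nonneg (hTnn n p.1 p.2)]
      exact hTle n p.1 p.2
  · intro x y z
    exact tsum_congr fun n => by simp only [hT]; rw [hdli n x y z]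
  · intro x y z
    exact tsum_congr fun n => by simp only [hT]; rw [hdri n x y z]
  · rintro f ⟨hf1, hf2⟩
    refine ⟨hf1, fun x y => ?_⟩
    have hb : |f x - f y| ≤ 2 := by
      have h1 := hf1 x; have h2 := hf1 y
      rw [Set.mem_Icc] at h1 h2
      rw [abs_le]; constructor <;> linarith
    rcases eq_or_lt_of_le (hnn x y) with h0 | h0
    · have : |f x - f y| ≤ 0 := by rw [h0]; exact hf2 x y
      exact le_trans this (tsum_nonneg fun n => hTnn n x y)
    · set m := min (Δ x y) 2 with hm
      have hmpos : 0 < m := lt_min h0 (by norm_num)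
      have hex : ∃ n : ℕ, (2⁻¹ : ℝ) ^ n ≤ m := by
        obtain ⟨n, hn⟩ := exists_pow_lt_of_lt_one hmpos (by norm_num : (2⁻¹ : ℝ) < 1)
        exact ⟨n, hn.le⟩
      obtain ⟨n, h1, hm2⟩ : ∃ n : ℕ, (2⁻¹ : ℝ) ^ n ≤ m ∧ m ≤ (2⁻¹ : ℝ) ^ n * 2 := by
        refine ⟨Nat.find hex, Nat.find_spec hex, ?_⟩
        rcases Nat.eq_zero_or_pos (Nat.find hex) with h | h
        · rw [h]; simp only [pow_zero, one_mul]; exact min_le_right _ _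
        · obtain ⟨k, hk⟩ := Nat.exists_eq_succ_of_ne_zero (Nat.pos_iff_ne_zero.mp h)
          have hkm : ¬ (2⁻¹ : ℝ) ^ k ≤ m := Nat.find_min hex (by omega)
          push_neg at hkm
          rw [hk]
          calc m ≤ (2⁻¹ : ℝ) ^ k := hkm.le
            _ = (2⁻¹ : ℝ) ^ (k + 1) * 2 := by ring
      -- d n x y ≥ ε n
      have hd : ε n ≤ d n x y := by
        by_contra hlt
        push_neg at hlt
        have hri' : d n (x * y⁻¹) 1 = d n x y := by
          have := hdri n x y y⁻¹; rwa [mul_inv_cancel] at this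
        have : x * y⁻¹ ∈ {g : G | d n g 1 < ε n} := by
          simp only [Set.mem_setOf_eq, hri']; exact hlt
        have hΔlt := hsub n this
        simp only [Set.mem_setOf_eq] at hΔlt
        have hΔeq : Δ (x * y⁻¹) 1 = Δ x y := by
          have := hri x y y⁻¹; rwa [mul_inv_cancel] at this
        rw [hΔeq] at hΔlt
        have : (2⁻¹ : ℝ) ^ n ≤ Δ x y := le_trans h1 (min_le_left _ _)
        linarith
      have hmin2 : min (2 / ε n * d n x y) 2 = 2 := by
        rw [min_eq_right]
        have : 2 / ε n * ε n ≤ 2 / ε n * d n x y :=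
          mul_le_mul_of_nonneg_left hd (hc n)
        rwa [div_mul_cancel₀ 2 (ne_of_gt (hε n))] at this
      have hTn : T n x y = (2⁻¹ : ℝ) ^ n * 2 := by simp only [hT]; rw [hmin2]
      calc |f x - f y| ≤ m := le_min (hf2 x y) hb
        _ ≤ T n x y := by rw [hTn]; exact hm2
        _ ≤ ∑' k, T k x y := Summable.le_tsum (hsummable x y) n (fun j _ => hTnn j x y)
end

section
/- Let Δ be a pseudometric on a set X and let f ∈ BLip_b(Δ) with ‖f‖ := sup_{x ∈ X} |f(x)| > 0. Then the function g := f / √‖f‖ belongs to BLip_b(2√Δ); that is, |g(x)| ≤ 1 for all x ∈ X and |g(x) − g(y)| ≤ 2·√(Δ(x,y)) for all x,y ∈ X. -/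
/-- If f ∈ BLip_b(Δ) has positive sup norm, then f/√‖f‖ ∈ BLip_b(2√Δ). -/
theorem div_sqrt_norm_mem_blipb {X : Type*} (d : X → X → ℝ) (hd : IsPseudometric d)
    (f : X → ℝ) (hf : f ∈ BLipb d) (hpos : 0 < ⨆ x, |f x|) :
    (∀ x : X, |f x / Real.sqrt (⨆ x, |f x|)| ≤ 1) ∧
      ∀ x y : X, |f x / Real.sqrt (⨆ x, |f x|) - f y / Real.sqrt (⨆ x, |f x|)| ≤
        2 * Real.sqrt (d x y) := by
  set M : ℝ := ⨆ x, |f x| with hM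
  have hab : ∀ x, |f x| ≤ 1 := fun x => abs_le.2 ⟨(hf.1 x).1, (hf.1 x).2⟩
  have hb : BddAbove (Set.range fun x => |f x|) :=
    ⟨1, by rintro _ ⟨x, rfl⟩; exact hab x⟩
  have hle : ∀ x, |f x| ≤ M := fun x => le_ciSup hb x
  have hMpos : 0 < M := hpos
  have hsqrtpos : 0 < Real.sqrt M := Real.sqrt_pos.2 hMpos
  constructor
  · intro x
    haveI : Nonempty X := ⟨x⟩
    have hM1 : M ≤ 1 := ciSup_le hab
    have hMsq : M ≤ Real.sqrt M := by
      nlinarith [Real.sq_sqrt hMpos.le, Real.sqrt_nonneg M, hM1, sq_nonneg (Real.sqrt M - 1)]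
    rw [abs_div, abs_of_pos hsqrtpos, div_le_one hsqrtpos]
    exact (hle x).trans hMsq
  · intro x y
    haveI : Nonempty X := ⟨x⟩
    rw [div_sub_div_same, abs_div, abs_of_pos hsqrtpos, div_le_iff₀ hsqrtpos]
    have h2M : |f x - f y| ≤ 2 * M := by
      calc |f x - f y| ≤ |f x| + |f y| := abs_sub _ _
        _ ≤ 2 * M := by have := hle x; have := hle y; linarith
    have hdxy : 0 ≤ d x y := hd.2.2.1 x y
    rcases le_total (d x y) M with h | h
    · calc |f x - f y| ≤ d x y := hf.2 x y
        _ = Real.sqrt (d x y) * Real.sqrt (d x y) := (Real.mul_self_sqrt hdxy).symm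
        _ ≤ (2 * Real.sqrt (d x y)) * Real.sqrt M := by
            have := Real.sqrt_le_sqrt h
            have := Real.sqrt_nonneg (d x y)
            nlinarith
    · calc |f x - f y| ≤ 2 * M := h2M
        _ = 2 * (Real.sqrt M * Real.sqrt M) := by rw [Real.mul_self_sqrt hMpos.le]
        _ ≤ (2 * Real.sqrt (d x y)) * Real.sqrt M := by
            have := Real.sqrt_le_sqrt h
            nlinarith
end

section
/- Let d be a pseudometric on a set X and let x, y ∈ X. Then sup { f(x) − f(y) : f ∈ BLip_b(d) } = min(2, d(x,y)). -/
/-- sup { f(x) − f(y) : f ∈ BLip_b(d) } = min(2, d(x,y)). -/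
theorem sSup_blipb_eval_sub (X : Type*) (d : X → X → ℝ) (hd : IsPseudometric d)
    (x y : X) :
    sSup ((fun f : X → ℝ => f x - f y) '' BLipb d) = min 2 (d x y) := by
  obtain ⟨hrefl, hsymm, hpos, htri⟩ := hd
  set a := d x y with ha
  have ha0 : 0 ≤ a := hpos x y
  set f : X → ℝ := fun z => max (-1) (min 1 (d z y - a / 2)) with hf
  have hfmem : f ∈ BLipb d := by
    constructor
    · intro z
      constructor
      · exact le_max_left _ _
      · exact max_le (by norm_num) (min_le_left _ _)
    · intro z w
      have h1 : |d z y - d w y| ≤ d z w := by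
        rw [abs_sub_le_iff]
        constructor
        · have := htri z w y; linarith
        · have := htri w z y
          have := hsymm w z
          linarith
      calc |f z - f w| ≤ max |(-1 : ℝ) - (-1)| |min 1 (d z y - a/2) - min 1 (d w y - a/2)| :=
            abs_max_sub_max_le_max _ _ _ _
        _ ≤ |(d z y - a/2) - (d w y - a/2)| := by
            apply max_le
            · simp [abs_nonneg]
            · calc |min 1 (d z y - a/2) - min 1 (d w y - a/2)|
                  ≤ max |(1:ℝ) - 1| |(d z y - a/2) - (d w y - a/2)| :=
                    abs_min_sub_min_le_max _ _ _ _
                _ ≤ _ := by simp [abs_nonneg]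
        _ = |d z y - d w y| := by ring_nf
        _ ≤ d z w := h1
  have hfx : f x = min 1 (a / 2) := by
    have h2 : d x y - a / 2 = a / 2 := by rw [← ha]; ring
    rw [hf]
    simp only [h2]
    exact max_eq_right (le_min (by norm_num) (by linarith))
  have hfy : f y = -(min 1 (a / 2)) := by
    have h2 : d y y - a / 2 = -(a / 2) := by rw [hrefl]; ring
    rw [hf]
    simp only [h2]
    rcases le_total (1:ℝ) (a/2) with h | h
    · rw [min_eq_left h, min_eq_right (by linarith : -(a/2) ≤ (1:ℝ)),
        max_eq_left (by linarith)]
    · rw [min_eq_right (by linarith : -(a/2) ≤ (1:ℝ)), min_eq_right h,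
        max_eq_right (by linarith)]
  have hval : f x - f y = min 2 a := by
    rw [hfx, hfy]
    have : min 1 (a/2) - -(min 1 (a/2)) = 2 * min 1 (a/2) := by ring
    rw [this, mul_min_of_nonneg _ _ (by norm_num : (0:ℝ) ≤ 2)]
    norm_num
    congr 1
    ring
  have hbdd : BddAbove ((fun f : X → ℝ => f x - f y) '' BLipb d) := by
    refine ⟨2, ?_⟩
    rintro v ⟨g, hg, rfl⟩
    have h1 := (hg.1 x).2
    have h2 := (hg.1 y).1
    simp only
    linarith
  apply le_antisymm
  · apply csSup_le (Set.Nonempty.image _ ⟨f, hfmem⟩)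
    rintro v ⟨g, hg, rfl⟩
    simp only
    apply le_min
    · have h1 := (hg.1 x).2
      have h2 := (hg.1 y).1
      linarith
    · have := hg.2 x y
      exact (abs_le.mp this).2.trans_eq rfl
  · rw [← hval]
    exact le_csSup hbdd ⟨f, hfmem, rfl⟩
end

section
/- Let G be a topological group, Δ a continuous bi-invariant pseudometric on G, n a molecular measure on G, and f ∈ BLip_b(Δ). Define n•f : G → ℝ by n•f(x) := ∑_y n(y)·f(x·y) (finite sum over the support of n). Then |n•f(x)| ≤ ‖n‖_{2√Δ} for every x ∈ G, and |n•f(x) − n•f(z)| ≤ √2 · ‖n‖_{2√Δ} · √(Δ(x,z)) for all x, z ∈ G. -/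
def molApply {G : Type*} (m : G →₀ ℝ) (f : G → ℝ) : ℝ := m.sum fun x c => c * f x

noncomputable def uebNorm {G : Type*} (d : G → G → ℝ) (m : G →₀ ℝ) : ℝ :=
  sSup ((fun f => molApply m f) '' BLipb d)

lemma min_le_sqrt_mul {a b : ℝ} (ha : 0 ≤ a) (hb : 0 ≤ b) :
    min a b ≤ Real.sqrt a * Real.sqrt b := by
  rcases le_total a b with h | h
  · rw [min_eq_left h]
    calc a = Real.sqrt a * Real.sqrt a := (Real.mul_self_sqrt ha).symm
    _ ≤ Real.sqrt a * Real.sqrt b :=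
      mul_le_mul_of_nonneg_left (Real.sqrt_le_sqrt h) (Real.sqrt_nonneg a)
  · rw [min_eq_right h]
    calc b = Real.sqrt b * Real.sqrt b := (Real.mul_self_sqrt hb).symm
    _ ≤ Real.sqrt a * Real.sqrt b :=
      mul_le_mul_of_nonneg_right (Real.sqrt_le_sqrt h) (Real.sqrt_nonneg b)

lemma mol_abs_le {G : Type*} (d' : G → G → ℝ) (n : G →₀ ℝ) {g : G → ℝ}
    (hg : g ∈ BLipb d') : |molApply n g| ≤ uebNorm d' n := by
  have hbdd : BddAbove ((fun f => molApply n f) '' BLipb d') := by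
    refine ⟨∑ x ∈ n.support, |n x|, ?_⟩
    rintro _ ⟨p, hp, rfl⟩
    show molApply n p ≤ _
    calc molApply n p = ∑ x ∈ n.support, n x * p x := rfl
    _ ≤ ∑ x ∈ n.support, |n x * p x| := Finset.sum_le_sum fun x _ => le_abs_self _
    _ ≤ ∑ x ∈ n.support, |n x| := by
        refine Finset.sum_le_sum fun x _ => ?_
        rw [abs_mul]
        have h1 : |p x| ≤ 1 := abs_le.2 ⟨(hp.1 x).1, (hp.1 x).2⟩
        nlinarith [abs_nonneg (n x)]
  have hneg : (fun y => -(g y)) ∈ BLipb d' := by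
    refine ⟨fun x => ?_, fun x y => ?_⟩
    · show -(g x) ∈ Set.Icc (-1 : ℝ) 1
      rw [Set.mem_Icc]
      exact ⟨by linarith [(hg.1 x).2], by linarith [(hg.1 x).1]⟩
    have := hg.2 x y
    rw [show -g x - -g y = -(g x - g y) by ring, abs_neg]; exact this
  have h1 : molApply n g ≤ uebNorm d' n := le_csSup hbdd ⟨g, hg, rfl⟩
  have h2 : molApply n (fun y => -(g y)) ≤ uebNorm d' n := le_csSup hbdd ⟨_, hneg, rfl⟩
  have h3 : molApply n (fun y => -(g y)) = -molApply n g := by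
    simp [molApply, Finsupp.sum, mul_neg]
  rw [h3] at h2; exact abs_le.2 ⟨by linarith, h1⟩

/-- bounds on n•f for a molecular measure n and f ∈ BLip_b(Δ),
Δ a continuous bi-invariant pseudometric. -/
theorem molecular_action_bounds (G : Type*) [Group G] [TopologicalSpace G]
    [IsTopologicalGroup G] [T2Space G]
    (Δ : G → G → ℝ) (hpm : IsPseudometric Δ) (hcont : ContPseudometric Δ)
    (hli : LeftInvariant Δ) (hri : RightInvariant Δ)
    (n : G →₀ ℝ) (f : G → ℝ) (hf : f ∈ BLipb Δ) :
    (∀ x : G, |molApply n fun y => f (x * y)| ≤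
        uebNorm (fun a b => 2 * Real.sqrt (Δ a b)) n) ∧
      ∀ x z : G, |(molApply n fun y => f (x * y)) - molApply n fun y => f (z * y)| ≤
        Real.sqrt 2 * uebNorm (fun a b => 2 * Real.sqrt (Δ a b)) n * Real.sqrt (Δ x z) := by
  obtain ⟨hd0, hsym, hnn, htri⟩ := hpm
  have hsqrt2 : Real.sqrt 2 ≤ 2 := by
    nlinarith [Real.sq_sqrt (by norm_num : (0:ℝ) ≤ 2), Real.sqrt_nonneg 2]
  have hb2 : ∀ a b : G, |f a - f b| ≤ 2 := by
    intro a b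
    have h1 := (hf.1 a).1; have h2 := (hf.1 a).2
    have h3 := (hf.1 b).1; have h4 := (hf.1 b).2
    rw [abs_le]; constructor <;> linarith
  have hlip2 : ∀ a b : G, |f a - f b| ≤ 2 * Real.sqrt (Δ a b) := by
    intro a b
    have hmin : |f a - f b| ≤ min 2 (Δ a b) := le_min (hb2 a b) (hf.2 a b)
    have := min_le_sqrt_mul (by norm_num : (0:ℝ) ≤ 2) (hnn a b)
    nlinarith [Real.sqrt_nonneg (Δ a b), Real.sqrt_nonneg 2]
  have hpart1 : ∀ x : G, |molApply n fun y => f (x * y)| ≤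
      uebNorm (fun a b => 2 * Real.sqrt (Δ a b)) n := by
    intro x
    refine mol_abs_le _ n ⟨fun y => hf.1 (x * y), fun a b => ?_⟩
    have := hlip2 (x * a) (x * b)
    rwa [hli a b x] at this
  refine ⟨hpart1, fun x z => ?_⟩
  set N := uebNorm (fun a b => 2 * Real.sqrt (Δ a b)) n with hN
  set t := Δ x z with htdef
  have ht0 : 0 ≤ t := hnn x z
  have hDt : ∀ y : G, |f (x * y) - f (z * y)| ≤ t := by
    intro y
    have := hf.2 (x * y) (z * y)
    rwa [hri x z y] at this
  rcases eq_or_lt_of_le ht0 with ht | ht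
  · have heq : (fun y => f (x * y)) = fun y => f (z * y) := by
      funext y
      have := hDt y
      rw [← ht] at this
      have h0 : f (x * y) - f (z * y) = 0 := abs_nonpos_iff.1 this
      linarith
    rw [heq, sub_self, abs_zero, ← ht, Real.sqrt_zero, mul_zero]
  · set c := Real.sqrt 2 * Real.sqrt t with hc
    have hcpos : 0 < c := mul_pos (Real.sqrt_pos.2 (by norm_num)) (Real.sqrt_pos.2 ht)
    set h : G → ℝ := fun y => (f (x * y) - f (z * y)) / c with hh
    have hhmem : h ∈ BLipb (fun a b => 2 * Real.sqrt (Δ a b)) := by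
      constructor
      · intro y
        have h1 : |f (x * y) - f (z * y)| ≤ c := by
          have hmin : |f (x * y) - f (z * y)| ≤ min 2 t := le_min (hb2 _ _) (hDt y)
          calc |f (x * y) - f (z * y)| ≤ min 2 t := hmin
          _ ≤ Real.sqrt 2 * Real.sqrt t := min_le_sqrt_mul (by norm_num) ht0
      
        have : |h y| ≤ 1 := by
          rw [hh, abs_div, abs_of_pos hcpos, div_le_one hcpos]; exact h1
        exact abs_le.1 this
      · intro a b
        have hsnn : 0 ≤ Δ a b := hnn a b
        have hdiff : |(f (x * a) - f (z * a)) - (f (x * b) - f (z * b))| ≤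
            min (2 * t) (2 * Δ a b) := by
          refine le_min ?_ ?_
          · calc _ ≤ |f (x * a) - f (z * a)| + |f (x * b) - f (z * b)| := abs_sub _ _
            _ ≤ 2 * t := by linarith [hDt a, hDt b]
          · have e1 : |f (x * a) - f (x * b)| ≤ Δ a b := by
              have := hf.2 (x * a) (x * b); rwa [hli a b x] at this
            have e2 : |f (z * a) - f (z * b)| ≤ Δ a b := by
              have := hf.2 (z * a) (z * b); rwa [hli a b z] at this
            calc |(f (x * a) - f (z * a)) - (f (x * b) - f (z * b))|
                = |(f (x * a) - f (x * b)) - (f (z * a) - f (z * b))| := by ring_nf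
            _ ≤ |f (x * a) - f (x * b)| + |f (z * a) - f (z * b)| := abs_sub _ _
            _ ≤ 2 * Δ a b := by linarith
        have hmin2 : min (2 * t) (2 * Δ a b) ≤
            (Real.sqrt 2 * Real.sqrt t) * (Real.sqrt 2 * Real.sqrt (Δ a b)) := by
          have := min_le_sqrt_mul (by linarith : (0:ℝ) ≤ 2 * t) (by linarith : (0:ℝ) ≤ 2 * Δ a b)
          rwa [Real.sqrt_mul (by norm_num) t, Real.sqrt_mul (by norm_num) (Δ a b)] at this
        have key : |(f (x * a) - f (z * a)) - (f (x * b) - f (z * b))| ≤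
            2 * Real.sqrt (Δ a b) * c := by
          have hs2 : Real.sqrt 2 * Real.sqrt (Δ a b) ≤ 2 * Real.sqrt (Δ a b) := by
            nlinarith [Real.sqrt_nonneg (Δ a b)]
          calc _ ≤ min (2 * t) (2 * Δ a b) := hdiff
          _ ≤ (Real.sqrt 2 * Real.sqrt t) * (Real.sqrt 2 * Real.sqrt (Δ a b)) := hmin2
          _ = (Real.sqrt 2 * Real.sqrt (Δ a b)) * c := by rw [hc]; ring
          _ ≤ 2 * Real.sqrt (Δ a b) * c := by
              exact mul_le_mul_of_nonneg_right hs2 hcpos.le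
        have : |h a - h b| = |(f (x * a) - f (z * a)) - (f (x * b) - f (z * b))| / c := by
          rw [hh]; rw [div_sub_div_same, abs_div, abs_of_pos hcpos]
        rw [this, div_le_iff₀ hcpos]
        exact key
    have hbound := mol_abs_le _ n hhmem
    have hsum : (molApply n fun y => f (x * y)) - (molApply n fun y => f (z * y)) =
        c * molApply n h := by
      simp only [molApply, Finsupp.sum, Finset.mul_sum, ← Finset.sum_sub_distrib]
      refine Finset.sum_congr rfl fun y _ => ?_
      rw [hh]
      field_simp
    rw [hsum, abs_mul, abs_of_pos hcpos]
    calc c * |molApply n h| ≤ c * N := mul_le_mul_of_nonneg_left hbound hcpos.le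
    _ = Real.sqrt 2 * N * Real.sqrt t := by rw [hc]; ring
end

section
/- In the additive group ℝ with the pseudometric d(x,y) = |x − y|, let √d denote the pseudometric (x,y) ↦ √|x − y|, and for each integer j ≥ 1 let m_j := j·(δ_{1/j²} − δ_0), a molecular measure on ℝ. Then ‖m_j‖_{√d} = 1 for every j ≥ 1. -/
lemma sqrt_add_le' (a b : ℝ) (ha : 0 ≤ a) (hb : 0 ≤ b) :
    Real.sqrt (a + b) ≤ Real.sqrt a + Real.sqrt b := by
  have h : Real.sqrt (a + b) ≤ Real.sqrt ((Real.sqrt a + Real.sqrt b) ^ 2) := by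
    apply Real.sqrt_le_sqrt
    nlinarith [Real.sq_sqrt ha, Real.sq_sqrt hb, Real.sqrt_nonneg a, Real.sqrt_nonneg b]
  rwa [Real.sqrt_sq (by positivity)] at h

lemma abs_sqrt_sub_sqrt (u v : ℝ) (hu : 0 ≤ u) (hv : 0 ≤ v) :
    |Real.sqrt u - Real.sqrt v| ≤ Real.sqrt |u - v| := by
  rcases le_total v u with h | h
  · rw [abs_of_nonneg (by simpa using Real.sqrt_le_sqrt h),
      abs_of_nonneg (by linarith)]
    have := sqrt_add_le' v (u - v) hv (by linarith)
    rw [add_sub_cancel] at this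
    linarith
  · rw [abs_sub_comm, abs_sub_comm u v,
      abs_of_nonneg (by simpa using Real.sqrt_le_sqrt h),
      abs_of_nonneg (by linarith)]
    have := sqrt_add_le' u (v - u) hu (by linarith)
    rw [add_sub_cancel] at this
    linarith

/-- for m_j = j(δ_{1/j²} − δ_0) on ℝ, one has ‖m_j‖_{√d} = 1 where
√d(x,y) = √|x − y|. -/
theorem uebNorm_sqrt_example (j : ℕ) (hj : 1 ≤ j) :
    uebNorm (fun x y : ℝ => Real.sqrt |x - y|)
        ((j : ℝ) • (Finsupp.single (1 / (j : ℝ) ^ 2) (1 : ℝ) - Finsupp.single 0 1)) = 1 := by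
  have hjR : (1 : ℝ) ≤ (j : ℝ) := by exact_mod_cast hj
  have hj0 : (0 : ℝ) < (j : ℝ) := by linarith
  set a : ℝ := 1 / (j : ℝ) ^ 2 with ha
  have ha0 : 0 < a := by positivity
  have hane : a ≠ 0 := ne_of_gt ha0
  set m : ℝ →₀ ℝ := (j : ℝ) • (Finsupp.single a (1 : ℝ) - Finsupp.single 0 1) with hm
  have hval : ∀ f : ℝ → ℝ, molApply m f = (j : ℝ) * f a - (j : ℝ) * f 0 := by
    intro f
    have : m = Finsupp.single a (j : ℝ) - Finsupp.single 0 (j : ℝ) := by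
      rw [hm, smul_sub]; simp
    rw [molApply, this, Finsupp.sum_sub_index (by intros; ring)]
    rw [Finsupp.sum_single_index (by ring), Finsupp.sum_single_index (by ring)]
  -- the witness function
  set g : ℝ → ℝ := fun x => min (Real.sqrt |x|) 1 with hg
  have hgmem : g ∈ BLipb (fun x y : ℝ => Real.sqrt |x - y|) := by
    constructor
    · intro x
      constructor
      · have : (0:ℝ) ≤ min (Real.sqrt |x|) 1 := le_min (Real.sqrt_nonneg _) zero_le_one
        linarith
      · exact min_le_right _ _
    · intro x y
      have h1 : |g x - g y| ≤ |Real.sqrt (abs x) - Real.sqrt (abs y)| := by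
        have := abs_min_sub_min_le_max (Real.sqrt (abs x)) 1 (Real.sqrt (abs y)) 1
        simpa using this
      have h2 : |Real.sqrt (abs x) - Real.sqrt (abs y)| ≤ Real.sqrt (abs (abs x - abs y)) :=
        abs_sqrt_sub_sqrt _ _ (abs_nonneg _) (abs_nonneg _)
      have h3 : Real.sqrt (abs (abs x - abs y)) ≤ Real.sqrt (abs (x - y)) :=
        Real.sqrt_le_sqrt (abs_abs_sub_abs_le_abs_sub x y)
      exact h1.trans (h2.trans h3)
  have hsqa : Real.sqrt a = 1 / (j : ℝ) := by
    rw [ha, show (1:ℝ) / (j:ℝ)^2 = ((1:ℝ)/(j:ℝ))^2 by ring, Real.sqrt_sq (by positivity)]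
  have hgval : molApply m g = 1 := by
    rw [hval]
    have h0 : g 0 = 0 := by simp [hg]
    have hA : g a = 1 / (j : ℝ) := by
      rw [hg]
      simp only [abs_of_pos ha0]
      rw [hsqa, min_eq_left (by rw [div_le_one hj0]; linarith)]
    rw [h0, hA]
    field_simp
    ring
  have hub : ∀ z ∈ (fun f => molApply m f) '' BLipb (fun x y : ℝ => Real.sqrt |x - y|),
      z ≤ 1 := by
    rintro z ⟨f, hf, rfl⟩
    simp only
    rw [hval, ← mul_sub]
    have := hf.2 a 0
    simp only [sub_zero] at this
    rw [abs_of_pos ha0, hsqa] at this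
    have : (j : ℝ) * (f a - f 0) ≤ (j : ℝ) * (1 / (j : ℝ)) := by
      apply mul_le_mul_of_nonneg_left _ (le_of_lt hj0)
      exact le_trans (le_abs_self _) this
    rw [mul_one_div, div_self (ne_of_gt hj0)] at this
    linarith [this]
  have hmem : (1 : ℝ) ∈ (fun f => molApply m f) '' BLipb (fun x y : ℝ => Real.sqrt |x - y|) :=
    ⟨g, hgmem, hgval⟩
  unfold uebNorm
  exact le_antisymm (csSup_le ⟨1, hmem⟩ hub) (le_csSup ⟨1, hub⟩ hmem)
end

section
/- Let G be a topological group equipped with its Borel σ-algebra, let μ be a finite tight Borel measure on G, and let Δ be a continuous right-invariant pseudometric on G. Then there exists a continuous right-invariant pseudometric Δ' on G such that for every f ∈ BLip_b(Δ) and all y, z ∈ G: |∫ f(x·y) dμ(x)| ≤ μ(G) and |∫ f(x·y) dμ(x) − ∫ f(x·z) dμ(x)| ≤ μ(G) · Δ'(y,z). -/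
open MeasureTheory Filter Topology

def IsTightMeas {G : Type*} [TopologicalSpace G] [MeasurableSpace G]
    (μ : MeasureTheory.Measure G) : Prop :=
  ∀ ε : ℝ, 0 < ε → ∃ K : Set G, IsCompact K ∧ μ Kᶜ < ENNReal.ofReal ε

/-- for a finite tight Borel measure μ and a continuous right-invariant
pseudometric Δ, the functions y ↦ ∫ f(x·y) dμ(x), f ∈ BLip_b(Δ), are uniformly bounded
by μ(G) and uniformly Lipschitz for some continuous right-invariant pseudometric Δ'. -/
theorem convolved_family_equi_luc (G : Type*) [Group G] [TopologicalSpace G]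
    [IsTopologicalGroup G] [T2Space G] [MeasurableSpace G] [BorelSpace G]
    (μ : MeasureTheory.Measure G) [MeasureTheory.IsFiniteMeasure μ] (hμ : IsTightMeas μ)
    (Δ : G → G → ℝ) (hpm : IsPseudometric Δ) (hcont : ContPseudometric Δ)
    (hri : RightInvariant Δ) :
    ∃ Δ' : G → G → ℝ, IsPseudometric Δ' ∧ ContPseudometric Δ' ∧ RightInvariant Δ' ∧
      ∀ f ∈ BLipb Δ, ∀ y z : G,
        |∫ x, f (x * y) ∂μ| ≤ (μ Set.univ).toReal ∧
        |(∫ x, f (x * y) ∂μ) - ∫ x, f (x * z) ∂μ| ≤ (μ Set.univ).toReal * Δ' y z := by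
  classical
  obtain ⟨h0, hsymm, hnn, htri⟩ := hpm
  by_cases hm0 : (μ Set.univ).toReal = 0
  · -- the measure is zero
    have : μ Set.univ = 0 := by
      have := measure_ne_top μ Set.univ
      exact (ENNReal.toReal_eq_zero_iff _).mp hm0 |>.resolve_right this
    have hμ0 : μ = 0 := Measure.measure_univ_eq_zero.mp this
    refine ⟨fun _ _ => 0, ⟨fun _ => rfl, fun _ _ => rfl, fun _ _ => le_refl 0,
      fun _ _ _ => by norm_num⟩, continuous_const, fun _ _ _ => rfl, ?_⟩
    intro f hf y z
    simp [hμ0]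
  -- main case: m > 0
  set m : ℝ := (μ Set.univ).toReal with hmdef
  have hmpos : 0 < m := lt_of_le_of_ne ENNReal.toReal_nonneg (Ne.symm hm0)
  -- continuity and boundedness of members of BLipb Δ
  have hbd1 : ∀ f ∈ BLipb Δ, ∀ x : G, |f x| ≤ 1 := by
    intro f hf x
    exact abs_le.mpr ⟨(hf.1 x).1, (hf.1 x).2⟩
  have hfc : ∀ f ∈ BLipb Δ, Continuous f := by
    intro f hf
    rw [continuous_iff_continuousAt]
    intro x₀
    rw [ContinuousAt, tendsto_iff_dist_tendsto_zero]
    refine squeeze_zero (g := fun x => Δ x x₀) (fun x => dist_nonneg) (fun x => ?_) ?_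
    · rw [Real.dist_eq]; exact hf.2 x x₀
    · have hc : Continuous fun x : G => Δ x x₀ :=
        hcont.comp (continuous_id.prodMk continuous_const)
      have := hc.tendsto x₀
      rwa [h0 x₀] at this
  have hfint : ∀ f ∈ BLipb Δ, ∀ y : G, Integrable (fun x => f (x * y)) μ := by
    intro f hf y
    refine Integrable.mono' (integrable_const 1)
      (((hfc f hf).comp (continuous_mul_right y)).aestronglyMeasurable) ?_
    filter_upwards with x
    rw [Real.norm_eq_abs]
    exact hbd1 f hf _
  set I : (G → ℝ) → G → ℝ := fun f y => ∫ x, f (x * y) ∂μ with hIdef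
  have hIbd : ∀ f ∈ BLipb Δ, ∀ y, |I f y| ≤ m := by
    intro f hf y
    rw [← Real.norm_eq_abs]
    calc ‖I f y‖ ≤ ∫ x, ‖f (x * y)‖ ∂μ := norm_integral_le_integral_norm _
      _ ≤ ∫ _x, (1 : ℝ) ∂μ := by
          refine integral_mono ((hfint f hf y).norm) (integrable_const 1) fun x => ?_
          rw [Real.norm_eq_abs]; exact hbd1 f hf _
      _ = m := by simp [hmdef, measureReal_def]
  -- the sup pseudometric
  have hSne : Nonempty (BLipb Δ) :=
    ⟨⟨fun _ => 0, fun x => by norm_num, fun x y => by simpa using hnn x y⟩⟩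
  set D : G → G → ℝ := fun y z => ⨆ f : BLipb Δ, |I f.1 y - I f.1 z| with hDdef
  have hbddA : ∀ y z, BddAbove (Set.range fun f : BLipb Δ => |I f.1 y - I f.1 z|) := by
    intro y z
    refine ⟨2 * m, ?_⟩
    rintro r ⟨⟨f, hf⟩, rfl⟩
    calc |I f y - I f z| ≤ |I f y| + |I f z| := abs_sub _ _
      _ ≤ m + m := add_le_add (hIbd f hf y) (hIbd f hf z)
      _ = 2 * m := by ring
  have hle : ∀ f ∈ BLipb Δ, ∀ y z, |I f y - I f z| ≤ D y z := by
    intro f hf y z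
    exact le_ciSup (hbddA y z) ⟨f, hf⟩
  have hDnn : ∀ y z, 0 ≤ D y z := fun y z => Real.iSup_nonneg fun f => abs_nonneg _
  have hD0 : ∀ y, D y y = 0 := by
    intro y
    simp only [hDdef, sub_self, abs_zero]
    exact ciSup_const
  have hDsymm : ∀ y z, D y z = D z y := by
    intro y z
    simp only [hDdef, abs_sub_comm]
  have hDtri : ∀ y z w, D y w ≤ D y z + D z w := by
    intro y z w
    refine ciSup_le fun ⟨f, hf⟩ => ?_
    calc |I f y - I f w| ≤ |I f y - I f z| + |I f z - I f w| := abs_sub_le _ _ _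
      _ ≤ D y z + D z w := add_le_add (hle f hf y z) (hle f hf z w)
  -- right invariance of D
  have hshift : ∀ w : G, ∀ f ∈ BLipb Δ, (fun x => f (x * w)) ∈ BLipb Δ := by
    intro w f hf
    refine ⟨fun x => hf.1 _, fun x y => ?_⟩
    have := hf.2 (x * w) (y * w)
    rwa [hri x y w] at this
  have hIshift : ∀ (f : G → ℝ) (w y : G), I (fun x => f (x * w)) y = I f (y * w) := by
    intro f w y
    simp only [hIdef, mul_assoc]
  have hDle : ∀ y z w : G, D (y * w) (z * w) ≤ D y z := by
    intro y z w
    refine ciSup_le fun ⟨f, hf⟩ => ?_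
    have h1 : I f (y * w) = I (fun x => f (x * w)) y := (hIshift f w y).symm
    have h2 : I f (z * w) = I (fun x => f (x * w)) z := (hIshift f w z).symm
    rw [h1, h2]
    exact hle _ (hshift w f hf) y z
  have hDri : RightInvariant D := by
    intro y z w
    refine le_antisymm (hDle y z w) ?_
    have := hDle (y * w) (z * w) w⁻¹
    simpa using this
  -- core continuity estimate via tightness
  have hcore : ∀ y₀ : G, ∀ ε : ℝ, 0 < ε → ∀ᶠ y in 𝓝 y₀, D y y₀ ≤ ε := by
    intro y₀ ε hε
    set δ : ℝ := ε / (2 * (m + 1)) with hδdef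
    have hδpos : 0 < δ := by positivity
    obtain ⟨K, hK, hKμ⟩ := hμ (ε / 8) (by positivity)
    have hKm : MeasurableSet K := hK.isClosed.measurableSet
    set W : Set (G × G) := {p : G × G | Δ (p.1 * p.2) p.1 < δ} with hWdef
    have hWopen : IsOpen W := by
      have hc : Continuous fun p : G × G => Δ (p.1 * p.2) p.1 :=
        hcont.comp ((continuous_fst.mul continuous_snd).prodMk continuous_fst)
      exact isOpen_lt hc continuous_const
    have hsub : K ×ˢ ({1} : Set G) ⊆ W := by
      rintro ⟨x, u⟩ ⟨hx, hu⟩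
      simp only [Set.mem_singleton_iff] at hu
      subst hu
      simp only [hWdef, Set.mem_setOf_eq, mul_one, h0]
      exact hδpos
    obtain ⟨U, V, hUo, hVo, hKU, h1V, hUV⟩ :=
      generalized_tube_lemma hK isCompact_singleton hWopen hsub
    have hV1 : V ∈ 𝓝 (1 : G) := hVo.mem_nhds (h1V rfl)
    have hev : ∀ᶠ y in 𝓝 y₀, y * y₀⁻¹ ∈ V := by
      have hcm : Continuous fun y : G => y * y₀⁻¹ := continuous_mul_right _
      have : Tendsto (fun y : G => y * y₀⁻¹) (𝓝 y₀) (𝓝 1) := by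
        have := hcm.tendsto y₀
        simpa using this
      exact this.eventually_mem hV1
    filter_upwards [hev] with y hy
    refine ciSup_le fun ⟨f, hf⟩ => ?_
    -- estimate |I f y - I f y₀|
    have hint1 := hfint f hf y
    have hint2 := hfint f hf y₀
    have hgi : Integrable (fun x => |f (x * y) - f (x * y₀)|) μ := (hint1.sub hint2).abs
    have step1 : |I f y - I f y₀| ≤ ∫ x, |f (x * y) - f (x * y₀)| ∂μ := by
      rw [hIdef]
      simp only
      rw [← integral_sub hint1 hint2, ← Real.norm_eq_abs]
      exact (norm_integral_le_integral_norm _).trans (le_of_eq (by simp [Real.norm_eq_abs]))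
    have hsplit : ∫ x, |f (x * y) - f (x * y₀)| ∂μ =
        (∫ x in K, |f (x * y) - f (x * y₀)| ∂μ) + ∫ x in Kᶜ, |f (x * y) - f (x * y₀)| ∂μ :=
      (integral_add_compl hKm hgi).symm
    have hbK : ∫ x in K, |f (x * y) - f (x * y₀)| ∂μ ≤ δ * m := by
      have hmono : ∫ x in K, |f (x * y) - f (x * y₀)| ∂μ ≤ ∫ _x in K, δ ∂μ := by
        refine setIntegral_mono_on hgi.integrableOn (integrableOn_const (measure_ne_top μ K)) hKm ?_
        intro x hx
        have hΔeq : Δ (x * y) (x * y₀) = Δ (x * (y * y₀⁻¹)) x := by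
          have := hri (x * (y * y₀⁻¹)) x y₀
          rw [← this]
          congr 1 <;> group
        have hxW : (x, y * y₀⁻¹) ∈ W := hUV ⟨hKU hx, hy⟩
        have hlt : Δ (x * (y * y₀⁻¹)) x < δ := hxW
        calc |f (x * y) - f (x * y₀)| ≤ Δ (x * y) (x * y₀) := hf.2 _ _
          _ = Δ (x * (y * y₀⁻¹)) x := hΔeq
          _ ≤ δ := le_of_lt hlt
      calc ∫ x in K, |f (x * y) - f (x * y₀)| ∂μ ≤ ∫ _x in K, δ ∂μ := hmono
        _ = (μ K).toReal * δ := by rw [setIntegral_const, smul_eq_mul, measureReal_def]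
        _ ≤ m * δ := by
            refine mul_le_mul_of_nonneg_right ?_ (le_of_lt hδpos)
            exact ENNReal.toReal_mono (measure_ne_top μ _) (measure_mono (Set.subset_univ K))
        _ = δ * m := by ring
    have hbKc : ∫ x in Kᶜ, |f (x * y) - f (x * y₀)| ∂μ ≤ ε / 4 := by
      have hmono : ∫ x in Kᶜ, |f (x * y) - f (x * y₀)| ∂μ ≤ ∫ _x in Kᶜ, (2 : ℝ) ∂μ := by
        refine setIntegral_mono_on hgi.integrableOn (integrableOn_const (measure_ne_top μ Kᶜ)) hKm.compl ?_
        intro x _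
        calc |f (x * y) - f (x * y₀)| ≤ |f (x * y)| + |f (x * y₀)| := abs_sub _ _
          _ ≤ 1 + 1 := add_le_add (hbd1 f hf _) (hbd1 f hf _)
          _ = 2 := by norm_num
      have hKc : (μ Kᶜ).toReal ≤ ε / 8 :=
        ENNReal.toReal_le_of_le_ofReal (by positivity) (le_of_lt hKμ)
      calc ∫ x in Kᶜ, |f (x * y) - f (x * y₀)| ∂μ ≤ ∫ _x in Kᶜ, (2 : ℝ) ∂μ := hmono
        _ = (μ Kᶜ).toReal * 2 := by rw [setIntegral_const, smul_eq_mul, measureReal_def]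
        _ ≤ (ε / 8) * 2 := by nlinarith
        _ = ε / 4 := by ring
    have hδm : δ * m ≤ ε / 2 := by
      have : δ * m ≤ δ * (m + 1) := by nlinarith
      have heq : δ * (m + 1) = ε / 2 := by
        rw [hδdef]; field_simp
      linarith
    calc |I f y - I f y₀| ≤ ∫ x, |f (x * y) - f (x * y₀)| ∂μ := step1
      _ = _ + _ := hsplit
      _ ≤ δ * m + ε / 4 := add_le_add hbK hbKc
      _ ≤ ε / 2 + ε / 4 := by linarith
      _ ≤ ε := by linarith
  -- continuity of D
  have hDquad : ∀ a b c d : G, |D a b - D c d| ≤ D a c + D b d := by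
    intro a b c d
    rw [abs_sub_le_iff]
    constructor
    · have t1 := hDtri a c b
      have t2 := hDtri c d b
      have t3 := hDsymm d b
      linarith
    · have t1 := hDtri c a d
      have t2 := hDtri a b d
      have t3 := hDsymm c a
      have t4 := hDsymm d b
      linarith
  have hDcont : Continuous fun p : G × G => D p.1 p.2 := by
    rw [continuous_iff_continuousAt]
    rintro ⟨y₀, z₀⟩
    rw [ContinuousAt, Metric.tendsto_nhds]
    intro ε hε
    have h1 : ∀ᶠ p : G × G in 𝓝 (y₀, z₀), D p.1 y₀ ≤ ε / 4 :=
      (continuous_fst.tendsto (y₀, z₀)).eventually (hcore y₀ (ε / 4) (by positivity))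
    have h2 : ∀ᶠ p : G × G in 𝓝 (y₀, z₀), D p.2 z₀ ≤ ε / 4 :=
      (continuous_snd.tendsto (y₀, z₀)).eventually (hcore z₀ (ε / 4) (by positivity))
    filter_upwards [h1, h2] with p hp1 hp2
    rw [Real.dist_eq]
    calc |D p.1 p.2 - D y₀ z₀| ≤ D p.1 y₀ + D p.2 z₀ := hDquad _ _ _ _
      _ ≤ ε / 4 + ε / 4 := add_le_add hp1 hp2
      _ < ε := by linarith
  -- conclusion
  refine ⟨fun y z => D y z / m, ⟨?_, ?_, ?_, ?_⟩, ?_, ?_, ?_⟩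
  · intro y; show D y y / m = 0; rw [hD0, zero_div]
  · intro y z; show D y z / m = D z y / m; rw [hDsymm]
  · intro y z; exact div_nonneg (hDnn y z) (le_of_lt hmpos)
  · intro y z w
    show D y w / m ≤ D y z / m + D z w / m
    rw [← add_div, div_le_div_iff_of_pos_right hmpos]
    exact hDtri y z w
  · exact (hDcont.div_const m)
  · intro y z w; show D (y * w) (z * w) / m = D y z / m; rw [hDri]
  · intro f hf y z
    refine ⟨hIbd f hf y, ?_⟩
    calc |I f y - I f z| ≤ D y z := hle f hf y z
      _ = m * (D y z / m) := by field_simp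
end

section
/- Let G be a topological group equipped with its Borel σ-algebra, let μ be a nonzero finite tight Borel measure on G, and let Δ be a continuous right-invariant pseudometric on G with Δ(x,y) ≤ 2 for all x,y. Then the function Δ_μ defined by Δ_μ(y,z) := (∫ Δ(x·y, x·z) dμ(x)) / μ(G) is a continuous right-invariant pseudometric on G. -/
open MeasureTheory
/-- for a nonzero finite tight Borel measure μ and a continuous
right-invariant pseudometric Δ ≤ 2, the averaged pseudometric
Δ_μ(y,z) = (∫ Δ(x·y, x·z) dμ(x)) / μ(G) is a continuous right-invariant pseudometric. -/

theorem averaged_pseudometric (G : Type*) [Group G] [TopologicalSpace G]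
    [IsTopologicalGroup G] [T2Space G] [MeasurableSpace G] [BorelSpace G]
    (μ : MeasureTheory.Measure G) [MeasureTheory.IsFiniteMeasure μ] (hμ0 : μ ≠ 0)
    (hμ : IsTightMeas μ)
    (Δ : G → G → ℝ) (hpm : IsPseudometric Δ) (hcont : ContPseudometric Δ)
    (hri : RightInvariant Δ) (hbd : ∀ x y : G, Δ x y ≤ 2) :
    IsPseudometric (fun y z : G => (∫ x, Δ (x * y) (x * z) ∂μ) / (μ Set.univ).toReal) ∧
    ContPseudometric (fun y z : G => (∫ x, Δ (x * y) (x * z) ∂μ) / (μ Set.univ).toReal) ∧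
    RightInvariant (fun y z : G => (∫ x, Δ (x * y) (x * z) ∂μ) / (μ Set.univ).toReal) := by
  obtain ⟨hd0, hsymm, hnn, htri⟩ := hpm
  set c : ℝ := (μ Set.univ).toReal with hc
  have hcpos : 0 < c :=
    ENNReal.toReal_pos (Measure.measure_univ_pos.mpr hμ0).ne' (measure_ne_top μ _)
  have hcx : ∀ y z : G, Continuous fun x => Δ (x * y) (x * z) := fun y z =>
    hcont.comp ((continuous_mul_right y).prodMk (continuous_mul_right z))
  have hint : ∀ y z : G, Integrable (fun x => Δ (x * y) (x * z)) μ := by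
    intro y z
    refine ⟨(hcx y z).aestronglyMeasurable, HasFiniteIntegral.of_bounded (C := 2) ?_⟩
    filter_upwards with x
    rw [Real.norm_eq_abs, abs_of_nonneg (hnn _ _)]
    exact hbd _ _
  have habs : ∀ a b a' b' : G, |Δ a b - Δ a' b'| ≤ Δ a a' + Δ b b' := by
    intro a b a' b'
    rw [abs_sub_le_iff]
    have h1 := htri a a' b
    have h2 := htri a' b' b
    have h3 := htri a' a b'
    have h4 := htri a b b'
    have h5 := hsymm b' b
    have h6 := hsymm a' a
    constructor <;> linarith
  refine ⟨⟨?_, ?_, ?_, ?_⟩, ?_, ?_⟩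
  · intro x; simp [hd0]
  · intro x y; simp only; congr 1; exact integral_congr_ae (Filter.Eventually.of_forall fun a => hsymm _ _)
  · intro x y
    exact div_nonneg (integral_nonneg fun a => hnn _ _) hcpos.le
  · intro a b d
    simp only
    rw [← add_div, div_le_div_iff_of_pos_right hcpos]
    calc ∫ x, Δ (x * a) (x * d) ∂μ
        ≤ ∫ x, (Δ (x * a) (x * b) + Δ (x * b) (x * d)) ∂μ :=
          integral_mono (hint a d) ((hint a b).add (hint b d)) fun x => htri _ _ _
      _ = (∫ x, Δ (x * a) (x * b) ∂μ) + ∫ x, Δ (x * b) (x * d) ∂μ :=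
          integral_add (hint a b) (hint b d)
  · have hNcont : Continuous fun p : G × G => ∫ x, Δ (x * p.1) (x * p.2) ∂μ := by
      rw [continuous_iff_continuousAt]
      intro p₀
      rw [ContinuousAt, Metric.tendsto_nhds]
      intro ε hε
      set ε' : ℝ := ε / (c + 5) with hε'
      have hε'pos : 0 < ε' := div_pos hε (by linarith)
      obtain ⟨K, hK, hKμ⟩ := hμ ε' hε'pos
      have hKm : MeasurableSet K := hK.isClosed.measurableSet
      have hFcont : Continuous fun q : G × (G × G) =>
          Δ (q.1 * p₀.1) (q.1 * q.2.1) + Δ (q.1 * p₀.2) (q.1 * q.2.2) := by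
        apply Continuous.add
        · exact hcont.comp (((continuous_fst.mul continuous_const)).prodMk
            (continuous_fst.mul (continuous_fst.comp continuous_snd)))
        · exact hcont.comp (((continuous_fst.mul continuous_const)).prodMk
            (continuous_fst.mul (continuous_snd.comp continuous_snd)))
      have hUopen : IsOpen {q : G × (G × G) |
          Δ (q.1 * p₀.1) (q.1 * q.2.1) + Δ (q.1 * p₀.2) (q.1 * q.2.2) < ε'} :=
        isOpen_lt hFcont continuous_const
      have hsub : K ×ˢ ({p₀} : Set (G × G)) ⊆ {q : G × (G × G) |
          Δ (q.1 * p₀.1) (q.1 * q.2.1) + Δ (q.1 * p₀.2) (q.1 * q.2.2) < ε'} := by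
        rintro ⟨x, q⟩ ⟨hx, hq⟩
        simp only [Set.mem_singleton_iff] at hq
        subst hq
        simpa [hd0] using hε'pos
      obtain ⟨u, v, hu, hv, hKu, hpv, huv⟩ :=
        generalized_tube_lemma hK isCompact_singleton hUopen hsub
      have hvmem : v ∈ nhds p₀ := hv.mem_nhds (hpv rfl)
      filter_upwards [hvmem] with q hq
      have key : ∀ x ∈ K, |Δ (x * q.1) (x * q.2) - Δ (x * p₀.1) (x * p₀.2)| ≤ ε' := by
        intro x hx
        have h1 := habs (x * q.1) (x * q.2) (x * p₀.1) (x * p₀.2)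
        have h2 : Δ (x * p₀.1) (x * q.1) + Δ (x * p₀.2) (x * q.2) < ε' :=
          huv (show (x, q) ∈ u ×ˢ v from ⟨hKu hx, hq⟩)
        have h3 := hsymm (x * q.1) (x * p₀.1)
        have h4 := hsymm (x * q.2) (x * p₀.2)
        linarith
      have hintd : Integrable
          (fun x => Δ (x * q.1) (x * q.2) - Δ (x * p₀.1) (x * p₀.2)) μ :=
        (hint _ _).sub (hint _ _)
      rw [Real.dist_eq, ← integral_sub (hint _ _) (hint _ _)]
      rw [← integral_add_compl hKm hintd]
      have hbK : |∫ x in K, (Δ (x * q.1) (x * q.2) - Δ (x * p₀.1) (x * p₀.2)) ∂μ|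
          ≤ ε' * (μ K).toReal := by
        have h := norm_setIntegral_le_of_norm_le_const (μ := μ) (s := K)
          (f := fun x => Δ (x * q.1) (x * q.2) - Δ (x * p₀.1) (x * p₀.2)) (C := ε')
          (measure_lt_top μ K) (fun x hx => by
            rw [Real.norm_eq_abs]; exact key x hx)
        rwa [Real.norm_eq_abs, Measure.real] at h
      have hbKc : |∫ x in Kᶜ, (Δ (x * q.1) (x * q.2) - Δ (x * p₀.1) (x * p₀.2)) ∂μ|
          ≤ 4 * (μ Kᶜ).toReal := by
        have h := norm_setIntegral_le_of_norm_le_const (μ := μ) (s := Kᶜ)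
          (f := fun x => Δ (x * q.1) (x * q.2) - Δ (x * p₀.1) (x * p₀.2)) (C := 4)
          (measure_lt_top μ Kᶜ) (fun x _ => by
            rw [Real.norm_eq_abs]
            have h1 := hnn (x * q.1) (x * q.2)
            have h2 := hnn (x * p₀.1) (x * p₀.2)
            have h3 := hbd (x * q.1) (x * q.2)
            have h4 := hbd (x * p₀.1) (x * p₀.2)
            rw [abs_sub_le_iff]
            constructor <;> linarith)
        rwa [Real.norm_eq_abs, Measure.real] at h
      have hμK : (μ K).toReal ≤ c :=
        ENNReal.toReal_mono (measure_ne_top μ _) (measure_mono (Set.subset_univ K))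
      have hμKc : (μ Kᶜ).toReal < ε' := by
        have := ENNReal.toReal_strict_mono (by simp) hKμ
        rwa [ENNReal.toReal_ofReal hε'pos.le] at this
      have h5 := abs_add_le (∫ x in K, (Δ (x * q.1) (x * q.2) - Δ (x * p₀.1) (x * p₀.2)) ∂μ)
        (∫ x in Kᶜ, (Δ (x * q.1) (x * q.2) - Δ (x * p₀.1) (x * p₀.2)) ∂μ)
      have h6 : ε' * (μ K).toReal ≤ ε' * c := mul_le_mul_of_nonneg_left hμK hε'pos.le
      have h8 : ε' * c + 5 * ε' = ε := by
        have : ε' * (c + 5) = ε := div_mul_cancel₀ ε (by linarith : c + 5 ≠ 0)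
        linarith [this, (by ring : ε' * (c + 5) = ε' * c + 5 * ε')]
      linarith
    exact hNcont.div_const c
  · intro a b w
    simp only
    congr 1
    refine integral_congr_ae (Filter.Eventually.of_forall fun x => ?_)
    show Δ (x * (a * w)) (x * (b * w)) = Δ (x * a) (x * b)
    rw [← mul_assoc, ← mul_assoc, hri]
end

section
/- Let G be a topological group equipped with its Borel σ-algebra such that the multiplication map G × G → G is measurable, let μ be a finite tight Borel measure on G, and let Θ be a continuous right-invariant pseudometric on G. Then there exists a continuous right-invariant pseudometric Δ on G such that for all finite Borel measures ν, ν' on G: sup { |∫ f d(μ ⋆ ν) − ∫ f d(μ ⋆ ν')| : f ∈ BLip_b(Θ) } ≤ μ(G) · sup { |∫ f dν − ∫ f dν'| : f ∈ BLip_b(Δ) }. -/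
noncomputable def measConv {G : Type*} [Monoid G] [MeasurableSpace G]
    (μ ν : MeasureTheory.Measure G) : MeasureTheory.Measure G :=
  (μ.prod ν).map fun p : G × G => p.1 * p.2

open MeasureTheory Set Filter Topology

lemma blipb_continuous {G : Type*} [TopologicalSpace G] {d : G → G → ℝ}
    (hd : ContPseudometric d) (hd0 : ∀ x, d x x = 0) {f : G → ℝ}
    (hf : f ∈ BLipb d) : Continuous f := by
  rw [continuous_iff_continuousAt]
  intro x₀
  have h1 : Filter.Tendsto (fun x => d x x₀) (nhds x₀) (nhds 0) := by
    have hcc : Continuous (fun x : G => d x x₀) :=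
      hd.comp (continuous_id.prodMk (continuous_const : Continuous fun _ : G => x₀))
    simpa [hd0] using hcc.tendsto x₀
  have h2 : Filter.Tendsto (fun x => |f x - f x₀|) (nhds x₀) (nhds 0) :=
    squeeze_zero (fun x => abs_nonneg _) (fun x => hf.2 x x₀) h1
  rw [ContinuousAt, tendsto_iff_dist_tendsto_zero]
  simpa [Real.dist_eq] using h2

lemma min_two_add {a b : ℝ} (ha : 0 ≤ a) (hb : 0 ≤ b) :
    min 2 (a + b) ≤ min 2 a + min 2 b := by
  rcases le_total 2 a with h | h
  · rw [min_eq_left h]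
    exact le_add_of_le_of_nonneg (min_le_left _ _) (le_min (by norm_num) hb)
  · rcases le_total 2 b with h' | h'
    · rw [min_eq_left h']
      have h1 : min 2 (a + b) ≤ 2 := min_le_left _ _
      have h2 : (0:ℝ) ≤ min 2 a := le_min (by norm_num) ha
      linarith
    · rw [min_eq_right h, min_eq_right h']
      exact min_le_right _ _
lemma cont_integral_param {G : Type*} [TopologicalSpace G] [T2Space G] [MeasurableSpace G]
    [BorelSpace G] (μ : Measure G) [IsFiniteMeasure μ] (hμ : IsTightMeas μ)
    {Y : Type*} [TopologicalSpace Y] (h : G → Y → ℝ)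
    (hcont : Continuous fun p : G × Y => h p.1 p.2)
    (hb : ∀ x y, |h x y| ≤ 2) :
    Continuous fun y => ∫ x, h x y ∂μ := by
  have hint : ∀ y, Integrable (fun x => h x y) μ := fun y =>
    Integrable.mono' (integrable_const 2)
      ((hcont.comp (continuous_id.prodMk (continuous_const : Continuous fun _ : G => y))).aestronglyMeasurable)
      (Eventually.of_forall fun x => by simpa [Real.norm_eq_abs] using hb x y)
  rw [continuous_iff_continuousAt]
  intro y₀
  rw [ContinuousAt, Metric.tendsto_nhds]
  intro ε hε
  obtain ⟨K, hK, hKc⟩ := hμ (ε / 8) (by linarith)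
  have hKm : MeasurableSet K := hK.isClosed.measurableSet
  set m := (μ Set.univ).toReal with hm
  have hm0 : 0 ≤ m := ENNReal.toReal_nonneg
  set ε' := ε / (2 * (m + 1)) with hε'
  have hε'pos : 0 < ε' := by positivity
  have hU : IsOpen {p : G × Y | |h p.1 p.2 - h p.1 y₀| < ε'} := by
    have hc2 : Continuous fun p : G × Y => |h p.1 p.2 - h p.1 y₀| := by
      apply Continuous.abs
      exact hcont.sub (hcont.comp (continuous_fst.prodMk
        (continuous_const : Continuous fun _ : G × Y => y₀)))
    exact isOpen_lt hc2 continuous_const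
  have hsub : K ×ˢ ({y₀} : Set Y) ⊆ {p : G × Y | |h p.1 p.2 - h p.1 y₀| < ε'} := by
    rintro ⟨x, y⟩ ⟨hx, hy⟩
    simp only [mem_singleton_iff] at hy
    simp [hy, hε'pos]
  obtain ⟨u, v, huo, hvo, hKu, hy₀v, huv⟩ :=
    generalized_tube_lemma hK isCompact_singleton hU hsub
  filter_upwards [hvo.mem_nhds (hy₀v rfl)] with y hy
  have hdiffInt : Integrable (fun x => h x y - h x y₀) μ := (hint y).sub (hint y₀)
  rw [Real.dist_eq, ← integral_sub (hint y) (hint y₀)]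
  have hsplit : ∫ x, (h x y - h x y₀) ∂μ =
      (∫ x in K, (h x y - h x y₀) ∂μ) + ∫ x in Kᶜ, (h x y - h x y₀) ∂μ :=
    (integral_add_compl hKm hdiffInt).symm
  have h1 : ‖∫ x in K, (h x y - h x y₀) ∂μ‖ ≤ ε' * (μ K).toReal := by
    apply norm_setIntegral_le_of_norm_le_const (measure_lt_top μ K)
    · intro x hx
      have : (x, y) ∈ {p : G × Y | |h p.1 p.2 - h p.1 y₀| < ε'} :=
        huv ⟨hKu hx, hy⟩
      simpa [Real.norm_eq_abs] using le_of_lt this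
  have h2 : ‖∫ x in Kᶜ, (h x y - h x y₀) ∂μ‖ ≤ 4 * (μ Kᶜ).toReal := by
    apply norm_setIntegral_le_of_norm_le_const (measure_lt_top μ Kᶜ)
    · intro x _
      have := abs_sub (h x y) (h x y₀)
      rw [Real.norm_eq_abs]
      calc |h x y - h x y₀| ≤ |h x y| + |h x y₀| := abs_sub _ _
        _ ≤ 4 := by have := hb x y; have := hb x y₀; linarith
  have hKcr : (μ Kᶜ).toReal < ε / 8 := by
    have hne : μ Kᶜ ≠ ⊤ := (measure_lt_top μ Kᶜ).ne
    rw [← ENNReal.ofReal_toReal hne] at hKc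
    exact (ENNReal.ofReal_lt_ofReal_iff (by linarith)).mp hKc
  have hK1 : ε' * (μ K).toReal ≤ ε / 2 := by
    have hle : (μ K).toReal ≤ m := by
      rw [hm]
      exact ENNReal.toReal_mono (measure_ne_top μ _) (measure_mono (subset_univ _))
    have : ε' * (μ K).toReal ≤ ε' * (m + 1) := by nlinarith
    rw [hε'] at this ⊢
    have heq : ε / (2 * (m + 1)) * (m + 1) = ε / 2 := by field_simp
    linarith [heq ▸ this]
  calc ‖∫ x, (h x y - h x y₀) ∂μ‖
      ≤ ‖∫ x in K, (h x y - h x y₀) ∂μ‖ + ‖∫ x in Kᶜ, (h x y - h x y₀) ∂μ‖ := by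
        rw [hsplit]; exact norm_add_le _ _
    _ < ε := by
        have : 4 * (μ Kᶜ).toReal < ε / 2 := by linarith
        linarith

/-- for a finite tight measure μ and a continuous right-invariant
pseudometric Θ there is a continuous right-invariant pseudometric Δ such that left
convolution with μ is UEB-continuous: the Θ-distance of μ ⋆ ν and μ ⋆ ν' is bounded by
μ(G) times the Δ-distance of ν and ν'. -/
theorem conv_right_variable_estimate (G : Type*) [Group G] [TopologicalSpace G]
    [IsTopologicalGroup G] [T2Space G] [MeasurableSpace G] [BorelSpace G]
    (hmul : Measurable fun p : G × G => p.1 * p.2)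
    (μ : MeasureTheory.Measure G) [MeasureTheory.IsFiniteMeasure μ] (hμ : IsTightMeas μ)
    (Θ : G → G → ℝ) (hpm : IsPseudometric Θ) (hcont : ContPseudometric Θ)
    (hri : RightInvariant Θ) :
    ∃ Δ : G → G → ℝ, IsPseudometric Δ ∧ ContPseudometric Δ ∧ RightInvariant Δ ∧
      ∀ ν ν' : MeasureTheory.Measure G, MeasureTheory.IsFiniteMeasure ν →
        MeasureTheory.IsFiniteMeasure ν' →
        sSup ((fun f : G → ℝ =>
            |(∫ x, f x ∂(measConv μ ν)) - ∫ x, f x ∂(measConv μ ν')|) '' BLipb Θ) ≤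
          (μ Set.univ).toReal *
            sSup ((fun f : G → ℝ => |(∫ x, f x ∂ν) - ∫ x, f x ∂ν'|) '' BLipb Δ) := by
  obtain ⟨hrefl, hsymm, hnn, htri⟩ := hpm
  set c := (μ Set.univ).toReal with hc
  have hc0 : (0:ℝ) ≤ c := ENNReal.toReal_nonneg
  set h : G → G × G → ℝ := fun x p => min 2 (Θ (x * p.1) (x * p.2)) with hh
  have hhcont : Continuous fun q : G × (G × G) => h q.1 q.2 := by
    apply continuous_const.min
    exact hcont.comp ((continuous_fst.mul (continuous_fst.comp continuous_snd)).prodMk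
      (continuous_fst.mul (continuous_snd.comp continuous_snd)))
  have hpos : ∀ x p, 0 ≤ h x p := fun x p => le_min (by norm_num) (hnn _ _)
  have hb2 : ∀ x p, |h x p| ≤ 2 := fun x p => by
    rw [abs_of_nonneg (hpos x p)]; exact min_le_left _ _
  have hint : ∀ p : G × G, Integrable (fun x => h x p) μ := fun p =>
    Integrable.mono' (integrable_const 2)
      ((hhcont.comp (continuous_id.prodMk
        (continuous_const : Continuous fun _ : G => p))).aestronglyMeasurable)
      (Eventually.of_forall fun x => by simpa [Real.norm_eq_abs] using hb2 x p)
  set D : G → G → ℝ := fun y y' => c⁻¹ * ∫ x, h x (y, y') ∂μ with hD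
  have hDnn : ∀ y y', 0 ≤ D y y' := fun y y' =>
    mul_nonneg (inv_nonneg.mpr hc0) (integral_nonneg fun x => hpos x _)
  refine ⟨D, ⟨?_, ?_, hDnn, ?_⟩, ?_, ?_, ?_⟩
  · -- refl
    intro y
    have : (fun x => h x (y, y)) = fun _ => (0:ℝ) := by
      funext x; simp [hh, hrefl, min_eq_right (by norm_num : (0:ℝ) ≤ 2)]
    simp [hD, this]
  · -- symm
    intro y y'
    have : (fun x => h x (y, y')) = fun x => h x (y', y) := by
      funext x; simp [hh, hsymm (x * y) (x * y')]
    rw [hD]; dsimp only; rw [this]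
  · -- triangle
    intro a b e
    have key : ∀ x, h x (a, e) ≤ h x (a, b) + h x (b, e) := fun x =>
      le_trans (min_le_min le_rfl (htri (x*a) (x*b) (x*e)))
        (min_two_add (hnn _ _) (hnn _ _))
    have : ∫ x, h x (a, e) ∂μ ≤ ∫ x, (h x (a, b) + h x (b, e)) ∂μ :=
      integral_mono (hint _) ((hint _).add (hint _)) key
    rw [integral_add (hint _) (hint _)] at this
    calc D a e ≤ c⁻¹ * ((∫ x, h x (a, b) ∂μ) + ∫ x, h x (b, e) ∂μ) :=
          mul_le_mul_of_nonneg_left this (inv_nonneg.mpr hc0)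
      _ = D a b + D b e := by rw [hD]; ring
  · -- continuity
    have := cont_integral_param μ hμ h hhcont hb2
    exact (continuous_const.mul this : Continuous fun p : G × G => c⁻¹ * ∫ x, h x p ∂μ)
  · -- right invariance
    intro y y' z
    have : (fun x => h x (y * z, y' * z)) = fun x => h x (y, y') := by
      funext x
      rw [hh]
      dsimp only
      rw [← mul_assoc, ← mul_assoc, hri]
    rw [hD]; dsimp only; rw [this]
  · -- main estimate
    intro ν ν' hν hν'
    haveI := hν; haveI := hν'
    have hBdd : BddAbove ((fun f : G → ℝ =>
        |(∫ x, f x ∂ν) - ∫ x, f x ∂ν'|) '' BLipb D) := by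
      refine ⟨(ν Set.univ).toReal + (ν' Set.univ).toReal, ?_⟩
      rintro r ⟨f, hf, rfl⟩
      have hb1 : ∀ᵐ x ∂ν, ‖f x‖ ≤ 1 :=
        Eventually.of_forall fun x => abs_le.2 ⟨(hf.1 x).1, (hf.1 x).2⟩
      have hb1' : ∀ᵐ x ∂ν', ‖f x‖ ≤ 1 :=
        Eventually.of_forall fun x => abs_le.2 ⟨(hf.1 x).1, (hf.1 x).2⟩
      have e1 : ‖∫ x, f x ∂ν‖ ≤ 1 * (ν Set.univ).toReal :=
        norm_integral_le_of_norm_le_const hb1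
      have e2 : ‖∫ x, f x ∂ν'‖ ≤ 1 * (ν' Set.univ).toReal :=
        norm_integral_le_of_norm_le_const hb1'
      rw [Real.norm_eq_abs] at e1 e2
      calc |(∫ x, f x ∂ν) - ∫ x, f x ∂ν'| ≤ |∫ x, f x ∂ν| + |∫ x, f x ∂ν'| :=
            abs_sub _ _
        _ ≤ (ν Set.univ).toReal + (ν' Set.univ).toReal := by linarith
    have hzmem : (0:ℝ) ∈ (fun f : G → ℝ =>
        |(∫ x, f x ∂ν) - ∫ x, f x ∂ν'|) '' BLipb D :=
      ⟨fun _ => 0, ⟨fun x => ⟨by norm_num, by norm_num⟩,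
        fun x y => by simpa using hDnn x y⟩, by simp⟩
    have hsSup0 : 0 ≤ sSup ((fun f : G → ℝ =>
        |(∫ x, f x ∂ν) - ∫ x, f x ∂ν'|) '' BLipb D) := le_csSup hBdd hzmem
    rcases eq_or_ne c 0 with hcz | hcz
    · -- μ = 0
      have hμ0 : μ = 0 := by
        have : μ Set.univ = 0 := by
          rcases (ENNReal.toReal_eq_zero_iff _).mp (hc ▸ hcz) with h0 | h0
          · exact h0
          · exact absurd h0 (measure_ne_top μ _)
        exact Measure.measure_univ_eq_zero.mp this
      apply Real.sSup_le _ (mul_nonneg hc0 hsSup0)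
      rintro r ⟨f, hf, rfl⟩
      have : ∀ ρ : Measure G, measConv μ ρ = 0 := fun ρ => by
        simp [measConv, hμ0]
      simp only [this, integral_zero_measure]
      simpa using mul_nonneg hc0 hsSup0
    · have hcpos : 0 < c := lt_of_le_of_ne hc0 (Ne.symm hcz)
      have hkey : ∀ (ρ : Measure G), IsFiniteMeasure ρ → ∀ f : G → ℝ, Continuous f →
          (∀ x, ‖f x‖ ≤ 1) →
          ∫ z, f z ∂(measConv μ ρ) = ∫ y, ∫ x, f (x * y) ∂μ ∂ρ := by
        intro ρ hρ f hfc hfb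
        haveI := hρ
        have hintp : Integrable (fun p : G × G => f (p.1 * p.2)) (μ.prod ρ) :=
          Integrable.mono' (integrable_const 1)
            ((hfc.measurable.comp hmul).aestronglyMeasurable)
            (Eventually.of_forall fun p => hfb _)
        rw [measConv, integral_map hmul.aemeasurable hfc.aestronglyMeasurable,
          ← integral_integral_swap hintp, MeasureTheory.integral_prod _ hintp]
      apply Real.sSup_le _ (mul_nonneg hc0 hsSup0)
      rintro r ⟨f, hf, rfl⟩
      dsimp only
      have hfc : Continuous f := blipb_continuous hcont hrefl hf
      have hfb : ∀ x, ‖f x‖ ≤ 1 := fun x => abs_le.2 ⟨(hf.1 x).1, (hf.1 x).2⟩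
      rw [hkey ν hν f hfc hfb, hkey ν' hν' f hfc hfb]
      set g : G → ℝ := fun y => c⁻¹ * ∫ x, f (x * y) ∂μ with hg
      have hIntf : ∀ y : G, Integrable (fun x => f (x * y)) μ := fun y =>
        Integrable.mono' (integrable_const 1)
          ((hfc.comp (continuous_id.mul
            (continuous_const : Continuous fun _ : G => y))).aestronglyMeasurable)
          (Eventually.of_forall fun x => hfb _)
      have hgmem : g ∈ BLipb D := by
        constructor
        · intro y
          have h1 : ‖∫ x, f (x * y) ∂μ‖ ≤ 1 * c :=
            norm_integral_le_of_norm_le_const (Eventually.of_forall fun x => hfb _)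
          rw [one_mul] at h1
          have h2 : |g y| ≤ 1 := by
            rw [hg]
            dsimp only
            rw [abs_mul, abs_inv, abs_of_nonneg hc0]
            calc c⁻¹ * |∫ x, f (x * y) ∂μ| ≤ c⁻¹ * c := by
                  apply mul_le_mul_of_nonneg_left _ (inv_nonneg.mpr hc0)
                  simpa [Real.norm_eq_abs] using h1
              _ = 1 := inv_mul_cancel₀ hcz
          exact abs_le.mp h2
        · intro y y'
          rw [hg]
          dsimp only
          rw [← mul_sub, abs_mul, abs_inv, abs_of_nonneg hc0]
          apply mul_le_mul_of_nonneg_left _ (inv_nonneg.mpr hc0)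
          rw [← integral_sub (hIntf y) (hIntf y')]
          calc |∫ x, (f (x * y) - f (x * y')) ∂μ|
              ≤ ∫ x, |f (x * y) - f (x * y')| ∂μ := by
                simpa [Real.norm_eq_abs] using
                  norm_integral_le_integral_norm (fun x => f (x * y) - f (x * y'))
            _ ≤ ∫ x, h x (y, y') ∂μ := by
                apply integral_mono ((hIntf y).sub (hIntf y')).abs (hint _)
                intro x
                refine le_min ?_ (hf.2 _ _)
                have := hfb (x * y); have := hfb (x * y')
                rw [Real.norm_eq_abs] at *
                calc |f (x * y) - f (x * y')| ≤ |f (x * y)| + |f (x * y')| :=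
                      abs_sub _ _
                  _ ≤ 2 := by linarith
      have heq : |(∫ y, ∫ x, f (x * y) ∂μ ∂ν) - ∫ y, ∫ x, f (x * y) ∂μ ∂ν'| =
          c * |(∫ y, g y ∂ν) - ∫ y, g y ∂ν'| := by
        rw [hg]
        dsimp only
        rw [integral_const_mul, integral_const_mul, ← mul_sub, abs_mul, abs_inv,
          abs_of_nonneg hc0, ← mul_assoc, mul_inv_cancel₀ hcz, one_mul]
      rw [heq]
      exact mul_le_mul_of_nonneg_left (le_csSup hBdd ⟨g, hgmem, rfl⟩) hc0
end

section
/- Let G be a Hausdorff topological group with identity e whose underlying topological space is locally compact or metrizable. Suppose that every bounded continuous function f : G → ℝ that is uniformly continuous for the right uniformity (for every ε > 0 there is a neighbourhood V of e such that x·y⁻¹ ∈ V implies |f(x) − f(y)| ≤ ε) is also uniformly continuous for the left uniformity (for every ε > 0 there is a neighbourhood V of e such that x⁻¹·y ∈ V implies |f(x) − f(y)| ≤ ε). Then G is a SIN group: for every neighbourhood U of e there exists a neighbourhood V of e such that x·v·x⁻¹ ∈ U for all x ∈ G and all v ∈ V. -/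
open Filter Set Topology Pointwise
set_option linter.unusedSectionVars false
set_option linter.unusedVariables false

namespace SINaux

lemma half_lt_one : (2:NNReal)⁻¹ < 1 := by
  rw [← NNReal.coe_lt_coe]; norm_num

lemma half_pos : (0:NNReal) < 2⁻¹ := by norm_num

lemma pow_half_le_one (m : ℕ) : (2:NNReal)⁻¹ ^ m ≤ 1 :=
  pow_le_one₀ zero_le (le_of_lt half_lt_one)

lemma pow_half_anti {m t : ℕ} (h : m ≤ t) : (2:NNReal)⁻¹ ^ t ≤ 2⁻¹ ^ m :=
  pow_le_pow_right_of_le_one' (le_of_lt half_lt_one) h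

lemma nnreal_eq_zero_of_le_pow {a : NNReal} (h : ∀ m : ℕ, a ≤ 2⁻¹ ^ m) : a = 0 := by
  by_contra hne
  have ha : 0 < a := pos_iff_ne_zero.2 hne
  obtain ⟨n, hn⟩ := NNReal.exists_pow_lt_of_lt_one ha half_lt_one
  exact absurd (h n) (not_le.2 hn)

lemma exists_dyadic {t : NNReal} (h0 : 0 < t) (h1 : t < 1) :
    ∃ n, 2⁻¹ ^ (n + 1) ≤ t ∧ t < 2⁻¹ ^ n := by
  have hex : ∃ m, ¬ t < 2⁻¹ ^ m := by
    obtain ⟨n, hn⟩ := NNReal.exists_pow_lt_of_lt_one h0 half_lt_one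
    exact ⟨n, not_lt.2 (le_of_lt hn)⟩
  classical
  have hfind := Nat.find_spec hex
  rcases Nat.eq_zero_or_pos (Nat.find hex) with h | h
  · rw [h] at hfind; simp at hfind
    exact absurd h1 (not_lt.2 hfind)
  · obtain ⟨n, hn⟩ := Nat.exists_eq_succ_of_ne_zero (Nat.pos_iff_ne_zero.1 h)
    rw [hn] at hfind
    have hlt : t < 2⁻¹ ^ n := by
      have := Nat.find_min hex (m := n) (by omega)
      simpa using not_not.1 this
    exact ⟨n, not_lt.1 hfind, hlt⟩

variable {G : Type*} [Group G] [TopologicalSpace G] [IsTopologicalGroup G]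

lemma inv_nhds {s : Set G} (hs : s ∈ 𝓝 (1:G)) : {g : G | g⁻¹ ∈ s} ∈ 𝓝 (1:G) := by
  have : ContinuousAt (fun g : G => g⁻¹) 1 := continuous_inv.continuousAt
  exact this.preimage_mem_nhds (by simpa using hs)

lemma conj_nhds (z : G) {s : Set G} (hs : s ∈ 𝓝 (1:G)) :
    {g : G | z * g * z⁻¹ ∈ s} ∈ 𝓝 (1:G) := by
  have hc : ContinuousAt (fun g : G => z * g * z⁻¹) 1 :=
    ((continuous_const.mul continuous_id).mul continuous_const).continuousAt
  exact hc.preimage_mem_nhds (by simpa using hs)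

lemma cube_nhds {U : Set G} (hU : U ∈ 𝓝 (1:G)) :
    ∃ V ∈ 𝓝 (1:G), (∀ g ∈ V, g⁻¹ ∈ V) ∧ (∀ a ∈ V, ∀ b ∈ V, ∀ c ∈ V, a*b*c ∈ U) := by
  obtain ⟨V1, hV1o, hV11, hV1⟩ := exists_open_nhds_one_mul_subset hU
  obtain ⟨V2, hV2o, hV21, hV2⟩ := exists_open_nhds_one_mul_subset (hV1o.mem_nhds hV11)
  refine ⟨V2 ∩ {g | g⁻¹ ∈ V2}, ?_, ?_, ?_⟩
  · exact Filter.inter_mem (hV2o.mem_nhds hV21) (inv_nhds (hV2o.mem_nhds hV21))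
  · rintro g ⟨h1, h2⟩; exact ⟨h2, by simpa using h1⟩
  · rintro a ⟨ha, -⟩ b ⟨hb, -⟩ c ⟨hc, -⟩
    have hab : a * b ∈ V1 := hV2 (Set.mul_mem_mul ha hb)
    have hc1 : c ∈ V1 := hV2 (by simpa using Set.mul_mem_mul hc hV21)
    exact hV1 (Set.mul_mem_mul hab hc1)

lemma closure_subset_mul (A : Set G) {W : Set G} (hW : W ∈ 𝓝 (1:G)) : closure A ⊆ A * W := by
  intro g hg
  have hc : ContinuousAt (fun a : G => a⁻¹ * g) g :=
    (continuous_inv.mul continuous_const).continuousAt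
  have hmem : (fun a : G => a⁻¹ * g) ⁻¹' W ∈ 𝓝 g := hc.preimage_mem_nhds (by simpa using hW)
  rcases mem_closure_iff_nhds.1 hg _ hmem with ⟨a, haW, haA⟩
  exact ⟨a, haA, a⁻¹ * g, haW, by group⟩

/-! ### The chain premetric -/

noncomputable def phi (V : ℕ → Set G) (g : G) : NNReal :=
  sInf (insert 1 {q | ∃ m, g ∈ V m ∧ q = (2:NNReal)⁻¹ ^ m})

variable (V : ℕ → Set G)

lemma phi_le_one (g : G) : phi V g ≤ 1 := csInf_le (OrderBot.bddBelow _) (mem_insert _ _)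

lemma phi_le_pow {g : G} {m : ℕ} (hg : g ∈ V m) : phi V g ≤ 2⁻¹ ^ m :=
  csInf_le (OrderBot.bddBelow _) (Set.mem_insert_of_mem _ ⟨m, hg, rfl⟩)

lemma mem_of_phi_lt (hmono : ∀ a b : ℕ, a ≤ b → V b ⊆ V a) {g : G} {m : ℕ}
    (h : phi V g < 2⁻¹ ^ m) : g ∈ V (m + 1) := by
  obtain ⟨q, hq, hlt⟩ := exists_lt_of_csInf_lt ⟨1, mem_insert _ _⟩ h
  rcases hq with rfl | ⟨m', hm', rfl⟩
  · exact absurd (lt_of_le_of_lt (pow_half_le_one m) hlt) (lt_irrefl _)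
  · have hmm : m < m' := (pow_lt_pow_iff_right_of_lt_one₀ half_pos half_lt_one).1 hlt
    exact hmono (m + 1) m' hmm hm'

lemma phi_eq_zero (hmono : ∀ a b : ℕ, a ≤ b → V b ⊆ V a) {g : G} {t₀ : ℕ}
    (hg : ∀ t, t₀ ≤ t → g ∈ V t) : phi V g = 0 := by
  apply nnreal_eq_zero_of_le_pow
  intro m
  calc phi V g ≤ 2⁻¹ ^ (max m t₀) := phi_le_pow V (hg _ (le_max_right _ _))
  _ ≤ 2⁻¹ ^ m := pow_half_anti (le_max_left _ _)

lemma phi_inv (hsym : ∀ t, ∀ g ∈ V t, g⁻¹ ∈ V t) (g : G) : phi V g⁻¹ = phi V g := by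
  unfold phi
  congr 1
  ext q
  simp only [mem_insert_iff, mem_setOf_eq]
  constructor
  · rintro (rfl | ⟨m, hm, rfl⟩)
    · exact Or.inl rfl
    · exact Or.inr ⟨m, by simpa using hsym m _ hm, rfl⟩
  · rintro (rfl | ⟨m, hm, rfl⟩)
    · exact Or.inl rfl
    · exact Or.inr ⟨m, hsym m _ hm, rfl⟩

lemma phi_quad (hmono : ∀ a b : ℕ, a ≤ b → V b ⊆ V a)
    (hcube : ∀ t, ∀ a ∈ V (t+1), ∀ b ∈ V (t+1), ∀ c ∈ V (t+1), a*b*c ∈ V t)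
    (a b c : G) :
    phi V (a * b * c) ≤ 2 * max (phi V a) (max (phi V b) (phi V c)) := by
  set t := max (phi V a) (max (phi V b) (phi V c)) with ht
  have hat : phi V a ≤ t := le_max_left _ _
  have hbt : phi V b ≤ t := le_trans (le_max_left _ _) (le_max_right _ _)
  have hct : phi V c ≤ t := le_trans (le_max_right _ _) (le_max_right _ _)
  rcases eq_or_lt_of_le (show (0:NNReal) ≤ t from zero_le) with h0 | h0
  · -- t = 0
    have hz : ∀ m, a * b * c ∈ V m := by
      intro m
      have hV : ∀ g : G, phi V g ≤ t → g ∈ V (m+1) := by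
        intro g hgt
        refine mem_of_phi_lt V hmono (lt_of_le_of_lt hgt ?_)
        rw [← h0]
        exact pow_pos half_pos _
      exact hcube m a (hV a hat) b (hV b hbt) c (hV c hct)
    have : phi V (a*b*c) = 0 := nnreal_eq_zero_of_le_pow fun m => phi_le_pow V (hz m)
    simp [this]
  · rcases le_or_gt (2⁻¹ : NNReal) t with hhalf | hhalf
    · calc phi V (a*b*c) ≤ 1 := phi_le_one V _
      _ = 2 * 2⁻¹ := by
          rw [← NNReal.coe_inj]; push_cast; norm_num
      _ ≤ 2 * t := by exact mul_le_mul_right hhalf 2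
    · have h1 : t < 1 := lt_trans hhalf half_lt_one
      obtain ⟨n, hn1, hn2⟩ := exists_dyadic h0 h1
      have hV : ∀ g : G, phi V g ≤ t → g ∈ V (n+1) := fun g hgt =>
        mem_of_phi_lt V hmono (lt_of_le_of_lt hgt hn2)
      have habc : a * b * c ∈ V n := hcube n a (hV a hat) b (hV b hbt) c (hV c hct)
      calc phi V (a*b*c) ≤ 2⁻¹ ^ n := phi_le_pow V habc
      _ = 2 * 2⁻¹ ^ (n+1) := by
          rw [pow_succ, ← NNReal.coe_inj]; push_cast; ring
      _ ≤ 2 * t := mul_le_mul_right hn1 2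


/-! ### Pseudometric from the premetric -/

lemma phi_one (hone : ∀ m, (1:G) ∈ V m) : phi V (1:G) = 0 :=
  nnreal_eq_zero_of_le_pow fun m => phi_le_pow V (hone m)

noncomputable def pmet (hone : ∀ m, (1:G) ∈ V m)
    (hsym : ∀ t, ∀ g ∈ V t, g⁻¹ ∈ V t) : PseudoMetricSpace G :=
  PseudoMetricSpace.ofPreNNDist (fun a b => phi V (a * b⁻¹))
    (fun a => show phi V (a * a⁻¹) = 0 by
      have e : a * a⁻¹ = (1:G) := by group
      rw [e]; exact phi_one V hone)
    (fun a b => show phi V (a * b⁻¹) = phi V (b * a⁻¹) by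
      have e : (a * b⁻¹)⁻¹ = b * a⁻¹ := by group
      rw [← phi_inv V hsym (a * b⁻¹), e])

lemma pmet_dist_le (hone : ∀ m, (1:G) ∈ V m) (hsym : ∀ t, ∀ g ∈ V t, g⁻¹ ∈ V t) (a b : G) :
    @dist G (pmet V hone hsym).toDist a b ≤ ((phi V (a * b⁻¹) : NNReal) : ℝ) :=
  PseudoMetricSpace.dist_ofPreNNDist_le _ _ _ a b

lemma pmet_le_dist (hone : ∀ m, (1:G) ∈ V m) (hsym : ∀ t, ∀ g ∈ V t, g⁻¹ ∈ V t)
    (hmono : ∀ a b : ℕ, a ≤ b → V b ⊆ V a)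
    (hcube : ∀ t, ∀ a ∈ V (t+1), ∀ b ∈ V (t+1), ∀ c ∈ V (t+1), a*b*c ∈ V t) (a b : G) :
    ((phi V (a * b⁻¹) : NNReal) : ℝ) ≤ 2 * @dist G (pmet V hone hsym).toDist a b := by
  have key := PseudoMetricSpace.le_two_mul_dist_ofPreNNDist (fun a b : G => phi V (a * b⁻¹))
    (fun a => show phi V (a * a⁻¹) = 0 by
      have e : a * a⁻¹ = (1:G) := by group
      rw [e]; exact phi_one V hone)
    (fun a b => show phi V (a * b⁻¹) = phi V (b * a⁻¹) by
      have e : (a * b⁻¹)⁻¹ = b * a⁻¹ := by group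
      rw [← phi_inv V hsym (a * b⁻¹), e])
    (fun x₁ x₂ x₃ x₄ => show phi V (x₁ * x₄⁻¹) ≤ _ by
      have e : x₁ * x₄⁻¹ = (x₁ * x₂⁻¹) * (x₂ * x₃⁻¹) * (x₃ * x₄⁻¹) := by group
      rw [e]
      exact phi_quad V hmono hcube _ _ _) a b
  exact key

/-! ### Dependent recursion helper -/

lemma dependent_choice {α : Type*} (Q : ℕ → α → Prop) (R : ℕ → α → α → Prop) (init : α)
    (h0 : Q 0 init) (hstep : ∀ n a, Q n a → ∃ b, Q (n+1) b ∧ R n a b) :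
    ∃ u : ℕ → α, u 0 = init ∧ ∀ n, Q n (u n) ∧ R n (u n) (u (n+1)) := by
  classical
  choose f hf1 hf2 using hstep
  let u : ℕ → α := fun n =>
    Nat.rec init (fun m ih => if h : Q m ih then f m ih h else ih) n
  have hQ : ∀ n, Q n (u n) := by
    intro n
    induction n with
    | zero => exact h0
    | succ m ih =>
      have e : u (m+1) = f m (u m) ih := dif_pos ih
      rw [e]; exact hf1 m (u m) ih
  refine ⟨u, rfl, fun n => ⟨hQ n, ?_⟩⟩
  have e : u (n+1) = f n (u n) (hQ n) := dif_pos (hQ n)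
  rw [e]; exact hf2 n (u n) (hQ n)

/-! ### The invariant for the recursive construction -/

def SInv (U₀ : Set G) (S : ℕ → Set G) (n : ℕ) (W : ℕ → Set G) (P : ℕ → G × G) : Prop :=
  (∀ t, t < n → W t ∈ 𝓝 (1:G)) ∧
  (∀ t, t < n → ∀ g ∈ W t, g⁻¹ ∈ W t) ∧
  (∀ t, t + 1 < n → ∀ a ∈ W (t+1), ∀ b ∈ W (t+1), ∀ c ∈ W (t+1), a*b*c ∈ W t) ∧
  (∀ t, t + 1 < n → W (t+1) ⊆ S (t+1)) ∧
  (2 ≤ n → W 1 ⊆ U₀) ∧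
  (∀ k t, k + 4 ≤ t → t + 1 < n → ∀ g ∈ W (t+1),
      (P k).1 * g * (P k).1⁻¹ ∈ W t ∧
      ((P k).1 * (P k).2) * g * ((P k).1 * (P k).2)⁻¹ ∈ W t) ∧
  (∀ j, j + 5 ≤ n → ((P j).2 ∈ W (j+4) ∧ ((P j).1 * (P j).2 * (P j).1⁻¹ ∉ U₀) ∧
      ∀ k, k < j → (P k).1 * (P j).2 * (P k).1⁻¹ ∈ W 3 ∧
        ((P k).1 * (P k).2) * (P j).2 * ((P k).1 * (P k).2)⁻¹ ∈ W 3))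

lemma step_ex (U₀ : Set G) (hU₀ : U₀ ∈ 𝓝 (1:G))
    (hbad : ∀ W ∈ 𝓝 (1:G), ∃ x v : G, v ∈ W ∧ x * v * x⁻¹ ∉ U₀)
    (S : ℕ → Set G) (hS : ∀ n, S n ∈ 𝓝 (1:G)) :
    ∀ (n : ℕ) (W : ℕ → Set G) (P : ℕ → G × G), SInv U₀ S n W P →
    ∃ (W' : ℕ → Set G) (P' : ℕ → G × G), SInv U₀ S (n+1) W' P' ∧
      ((∀ t, t ≠ n → W' t = W t) ∧ (∀ k, k + 5 ≤ n → P' k = P k)) := by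
  classical
  intro n W P hInv
  obtain ⟨hA, hB, hC, hD, hE, hF, hG⟩ := hInv
  rcases Nat.eq_zero_or_pos n with rfl | hn
  · refine ⟨Function.update W 0 Set.univ, P, ⟨?_, ?_, ?_, ?_, ?_, ?_, ?_⟩, ?_, ?_⟩
    · intro t ht
      have ht0 : t = 0 := by omega
      subst ht0
      rw [Function.update_self]
      exact Filter.univ_mem
    · intro t ht g hg
      have ht0 : t = 0 := by omega
      subst ht0
      rw [Function.update_self]
      exact Set.mem_univ _
    · intro t ht; exact absurd ht (by omega)
    · intro t ht; exact absurd ht (by omega)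
    · intro h2; exact absurd h2 (by omega)
    · intro k t hkt ht; exact absurd ht (by omega)
    · intro j hj; exact absurd hj (by omega)
    · intro t ht; exact Function.update_of_ne ht _ _
    · intro k hk; rfl
  · -- n ≥ 1
    have hprev : W (n-1) ∈ 𝓝 (1:G) := hA (n-1) (by omega)
    obtain ⟨V2, hV2n, hV2sym, hV2cube⟩ := cube_nhds hprev
    set CC : Set G := ⋂ k ∈ Finset.range (n-4),
        ({g : G | (P k).1 * g * (P k).1⁻¹ ∈ W (n-1)} ∩
         {g : G | ((P k).1 * (P k).2) * g * ((P k).1 * (P k).2)⁻¹ ∈ W (n-1)}) with hCCdef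
    have hCC : CC ∈ 𝓝 (1:G) := by
      rw [hCCdef]
      refine (Filter.biInter_finset_mem _).2 ?_
      intro k _
      exact Filter.inter_mem (conj_nhds _ hprev) (conj_nhds _ hprev)
    set T : Set G := V2 ∩ (S n ∩ (U₀ ∩ CC)) with hTdef
    have hT : T ∈ 𝓝 (1:G) :=
      Filter.inter_mem hV2n (Filter.inter_mem (hS n) (Filter.inter_mem hU₀ hCC))
    set Vn : Set G := T ∩ {g : G | g⁻¹ ∈ T} with hVndef
    have hVnn : Vn ∈ 𝓝 (1:G) := Filter.inter_mem hT (inv_nhds hT)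
    have hVnsym : ∀ g ∈ Vn, g⁻¹ ∈ Vn := by
      rintro g ⟨h1, h2⟩
      exact ⟨h2, by simpa using h1⟩
    have hVnsubV2 : Vn ⊆ V2 := fun g hg => hg.1.1
    have hVnS : Vn ⊆ S n := fun g hg => hg.1.2.1
    have hVnU : Vn ⊆ U₀ := fun g hg => hg.1.2.2.1
    have hVnCC : Vn ⊆ CC := fun g hg => hg.1.2.2.2
    have hVncube : ∀ a ∈ Vn, ∀ b ∈ Vn, ∀ c ∈ Vn, a*b*c ∈ W (n-1) :=
      fun a ha b hb c hc => hV2cube a (hVnsubV2 ha) b (hVnsubV2 hb) c (hVnsubV2 hc)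
    have hVnconj : ∀ k, k + 5 ≤ n → ∀ g ∈ Vn,
        (P k).1 * g * (P k).1⁻¹ ∈ W (n-1) ∧
        ((P k).1 * (P k).2) * g * ((P k).1 * (P k).2)⁻¹ ∈ W (n-1) := by
      intro k hk g hg
      have hgCC := hVnCC hg
      rw [hCCdef] at hgCC
      rw [Set.mem_iInter₂] at hgCC
      have := hgCC k (Finset.mem_range.2 (by omega))
      exact ⟨this.1, this.2⟩
    rcases Nat.lt_or_ge n 4 with hn4 | hn4
    · -- no pair created
      refine ⟨Function.update W n Vn, P, ⟨?_, ?_, ?_, ?_, ?_, ?_, ?_⟩, ?_, ?_⟩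
      · intro t ht
        rcases Nat.lt_or_ge t n with h1 | h1
        · rw [Function.update_of_ne (by omega)]; exact hA t h1
        · have : t = n := by omega
          subst this
          rw [Function.update_self]; exact hVnn
      · intro t ht
        rcases Nat.lt_or_ge t n with h1 | h1
        · rw [Function.update_of_ne (by omega)]; exact hB t h1
        · have : t = n := by omega
          subst this
          rw [Function.update_self]; exact hVnsym
      · intro t ht
        rcases Nat.lt_or_ge (t+1) n with h1 | h1
        · rw [Function.update_of_ne (by omega : t + 1 ≠ n),
            Function.update_of_ne (by omega : t ≠ n)]
          exact hC t h1
        · have he : t + 1 = n := by omega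
          rw [he, Function.update_self, Function.update_of_ne (by omega : t ≠ n)]
          have : t = n - 1 := by omega
          rw [this]
          exact hVncube
      · intro t ht
        rcases Nat.lt_or_ge (t+1) n with h1 | h1
        · rw [Function.update_of_ne (by omega : t + 1 ≠ n)]; exact hD t h1
        · have he : t + 1 = n := by omega
          rw [he, Function.update_self]
          exact hVnS
      · intro h2
        rcases Nat.lt_or_ge 1 n with h1 | h1
        · rw [Function.update_of_ne (by omega)]; exact hE (by omega)
        · have : n = 1 := by omega
          subst this
          rw [Function.update_self]; exact hVnU
      · intro k t hkt ht
        exact absurd ht (by omega)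
      · intro j hj
        exact absurd hj (by omega)
      · intro t ht; exact Function.update_of_ne ht _ _
      · intro k hk; rfl
    · -- n ≥ 4 : create the pair (x_{n-4}, v_{n-4})
      have hW3 : W 3 ∈ 𝓝 (1:G) := hA 3 (by omega)
      set DD : Set G := ⋂ k ∈ Finset.range (n-4),
          ({g : G | (P k).1 * g * (P k).1⁻¹ ∈ W 3} ∩
           {g : G | ((P k).1 * (P k).2) * g * ((P k).1 * (P k).2)⁻¹ ∈ W 3}) with hDDdef
      have hDD : DD ∈ 𝓝 (1:G) := by
        rw [hDDdef]
        refine (Filter.biInter_finset_mem _).2 ?_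
        intro k _
        exact Filter.inter_mem (conj_nhds _ hW3) (conj_nhds _ hW3)
      obtain ⟨xx, vv, hvv, hxxbad⟩ := hbad (Vn ∩ DD) (Filter.inter_mem hVnn hDD)
      have hvvVn : vv ∈ Vn := hvv.1
      have hvvDD : ∀ k, k < n - 4 →
          (P k).1 * vv * (P k).1⁻¹ ∈ W 3 ∧
          ((P k).1 * (P k).2) * vv * ((P k).1 * (P k).2)⁻¹ ∈ W 3 := by
        intro k hk
        have := hvv.2
        rw [hDDdef, Set.mem_iInter₂] at this
        have h2 := this k (Finset.mem_range.2 hk)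
        exact ⟨h2.1, h2.2⟩
      refine ⟨Function.update W n Vn, Function.update P (n-4) (xx, vv),
        ⟨?_, ?_, ?_, ?_, ?_, ?_, ?_⟩, ?_, ?_⟩
      · intro t ht
        rcases Nat.lt_or_ge t n with h1 | h1
        · rw [Function.update_of_ne (by omega)]; exact hA t h1
        · have : t = n := by omega
          subst this
          rw [Function.update_self]; exact hVnn
      · intro t ht
        rcases Nat.lt_or_ge t n with h1 | h1
        · rw [Function.update_of_ne (by omega)]; exact hB t h1
        · have : t = n := by omega
          subst this
          rw [Function.update_self]; exact hVnsym
      · intro t ht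
        rcases Nat.lt_or_ge (t+1) n with h1 | h1
        · rw [Function.update_of_ne (by omega : t + 1 ≠ n),
            Function.update_of_ne (by omega : t ≠ n)]
          exact hC t h1
        · have he : t + 1 = n := by omega
          rw [he, Function.update_self, Function.update_of_ne (by omega : t ≠ n)]
          have : t = n - 1 := by omega
          rw [this]
          exact hVncube
      · intro t ht
        rcases Nat.lt_or_ge (t+1) n with h1 | h1
        · rw [Function.update_of_ne (by omega : t + 1 ≠ n)]; exact hD t h1
        · have he : t + 1 = n := by omega
          rw [he, Function.update_self]
          exact hVnS
      · intro h2
        rcases Nat.lt_or_ge 1 n with h1 | h1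
        · rw [Function.update_of_ne (by omega)]; exact hE (by omega)
        · have : n = 1 := by omega
          subst this
          rw [Function.update_self]; exact hVnU
      · intro k t hkt ht g hg
        have hkP : Function.update P (n-4) (xx, vv) k = P k :=
          Function.update_of_ne (by omega) _ _
        rw [hkP]
        rcases Nat.lt_or_ge (t+1) n with h1 | h1
        · rw [Function.update_of_ne (by omega : t + 1 ≠ n)] at hg
          rw [Function.update_of_ne (by omega : t ≠ n)]
          exact hF k t hkt h1 g hg
        · have he : t + 1 = n := by omega
          rw [he, Function.update_self] at hg
          rw [Function.update_of_ne (by omega : t ≠ n)]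
          have ht' : t = n - 1 := by omega
          rw [ht']
          exact hVnconj k (by omega) g hg
      · intro j hj
        rcases Nat.lt_or_ge (j+5) (n+1) with h1 | h1
        · -- old pair
          have hjP : Function.update P (n-4) (xx, vv) j = P j :=
            Function.update_of_ne (by omega) _ _
          have hGj := hG j (by omega)
          refine ⟨?_, ?_, ?_⟩
          · rw [hjP, Function.update_of_ne (by omega : j + 4 ≠ n)]
            exact hGj.1
          · rw [hjP]; exact hGj.2.1
          · intro k hk
            have hkP : Function.update P (n-4) (xx, vv) k = P k :=
              Function.update_of_ne (by omega) _ _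
            rw [hjP, hkP, Function.update_of_ne (by omega : (3:ℕ) ≠ n)]
            exact hGj.2.2 k hk
        · -- the new pair : j = n - 4
          have hjn : j = n - 4 := by omega
          subst hjn
          have hjP : Function.update P (n-4) (xx, vv) (n-4) = (xx, vv) :=
            Function.update_self _ _ _
          refine ⟨?_, ?_, ?_⟩
          · rw [hjP]
            have : n - 4 + 4 = n := by omega
            rw [this, Function.update_self]
            exact hvvVn
          · rw [hjP]; exact hxxbad
          · intro k hk
            have hkP : Function.update P (n-4) (xx, vv) k = P k :=
              Function.update_of_ne (by omega) _ _
            rw [hjP, hkP, Function.update_of_ne (by omega : (3:ℕ) ≠ n)]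
            exact hvvDD k hk
      · intro t ht; exact Function.update_of_ne ht _ _
      · intro k hk; exact Function.update_of_ne (by omega) _ _

/-! ### The recursive construction -/

lemma exists_seq (U₀ : Set G) (hU₀ : U₀ ∈ 𝓝 (1:G))
    (hbad : ∀ W ∈ 𝓝 (1:G), ∃ x v : G, v ∈ W ∧ x * v * x⁻¹ ∉ U₀)
    (S : ℕ → Set G) (hS : ∀ n, S n ∈ 𝓝 (1:G)) :
    ∃ (V : ℕ → Set G) (x v : ℕ → G),
      (∀ t, V t ∈ 𝓝 (1:G)) ∧
      (∀ t, ∀ g ∈ V t, g⁻¹ ∈ V t) ∧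
      (∀ t, ∀ a ∈ V (t+1), ∀ b ∈ V (t+1), ∀ c ∈ V (t+1), a * b * c ∈ V t) ∧
      (∀ t, V (t+1) ⊆ S (t+1)) ∧
      (V 1 ⊆ U₀) ∧
      (∀ k t, k + 4 ≤ t → ∀ g ∈ V (t+1),
        x k * g * (x k)⁻¹ ∈ V t ∧ (x k * v k) * g * (x k * v k)⁻¹ ∈ V t) ∧
      (∀ j, v j ∈ V (j+4)) ∧
      (∀ j, x j * v j * (x j)⁻¹ ∉ U₀) ∧
      (∀ k j, k < j → x k * v j * (x k)⁻¹ ∈ V 3 ∧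
        (x k * v k) * v j * (x k * v k)⁻¹ ∈ V 3) := by
  classical
  have h0 : SInv U₀ S 0 (fun _ => Set.univ) (fun _ => ((1:G),(1:G))) := by
    refine ⟨?_, ?_, ?_, ?_, ?_, ?_, ?_⟩
    · intro t ht; exact absurd ht (by omega)
    · intro t ht; exact absurd ht (by omega)
    · intro t ht; exact absurd ht (by omega)
    · intro t ht; exact absurd ht (by omega)
    · intro h2; exact absurd h2 (by omega)
    · intro k t hkt ht; exact absurd ht (by omega)
    · intro j hj; exact absurd hj (by omega)
  obtain ⟨u, hu0, hu⟩ := dependent_choice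
    (fun n p => SInv U₀ S n p.1 p.2)
    (fun n p q => (∀ t, t ≠ n → q.1 t = p.1 t) ∧ (∀ k, k + 5 ≤ n → q.2 k = p.2 k))
    ((fun _ => Set.univ), (fun _ => ((1:G),(1:G))))
    h0
    (by
      intro n p hp
      obtain ⟨W', P', h1, h2, h3⟩ := step_ex U₀ hU₀ hbad S hS n p.1 p.2 hp
      exact ⟨(W', P'), h1, h2, h3⟩)
  have hWstab : ∀ t n, t < n → (u n).1 t = (u (t+1)).1 t := by
    intro t n htn
    induction n with
    | zero => omega
    | succ m ih =>
      rcases Nat.lt_or_ge t m with h1 | h1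
      · have e := (hu m).2.1 t (by omega)
        rw [e]; exact ih h1
      · have : t = m := by omega
        subst this
        rfl
  have hPstab : ∀ j n, j + 5 ≤ n → (u n).2 j = (u (j+5)).2 j := by
    intro j n hjn
    induction n with
    | zero => omega
    | succ m ih =>
      rcases Nat.lt_or_ge (j+5) (m+1) with h1 | h1
      · have e := (hu m).2.2 j (by omega)
        rw [e]; exact ih (by omega)
      · have e : j + 5 = m + 1 := by omega
        rw [e]
  refine ⟨fun t => (u (t+1)).1 t, fun j => ((u (j+5)).2 j).1, fun j => ((u (j+5)).2 j).2,
    ?_, ?_, ?_, ?_, ?_, ?_, ?_, ?_, ?_⟩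
  · intro t
    obtain ⟨hA, -, -, -, -, -, -⟩ := (hu (t+1)).1
    exact hA t (by omega)
  · intro t
    obtain ⟨-, hB, -, -, -, -, -⟩ := (hu (t+1)).1
    exact hB t (by omega)
  · intro t a ha b hb c hc
    obtain ⟨-, -, hC, -, -, -, -⟩ := (hu (t+2)).1
    have e1 : (u (t+2)).1 (t+1) = (u (t+1+1)).1 (t+1) := hWstab (t+1) (t+2) (by omega)
    have e2 : (u (t+2)).1 t = (u (t+1)).1 t := hWstab t (t+2) (by omega)
    have e3 : t + 1 + 1 = t + 2 := by omega
    rw [e3] at e1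
    have := hC t (by omega) a (by rw [e1]; exact ha) b (by rw [e1]; exact hb)
      c (by rw [e1]; exact hc)
    rw [e2] at this
    exact this
  · intro t g hg
    obtain ⟨-, -, -, hD, -, -, -⟩ := (hu (t+2)).1
    have e1 : (u (t+2)).1 (t+1) = (u (t+1+1)).1 (t+1) := hWstab (t+1) (t+2) (by omega)
    have e3 : t + 1 + 1 = t + 2 := by omega
    rw [e3] at e1
    exact hD t (by omega) (by rw [e1]; exact hg)
  · obtain ⟨-, -, -, -, hE, -, -⟩ := (hu 2).1
    intro g hg
    have e1 : (u 2).1 1 = (u (1+1)).1 1 := hWstab 1 2 (by omega)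
    have e3 : (1:ℕ) + 1 = 2 := by omega
    rw [e3] at e1
    exact hE (by omega) (by rw [e1]; exact hg)
  · intro k t hkt g hg
    obtain ⟨-, -, -, -, -, hF, -⟩ := (hu (t+2)).1
    have e1 : (u (t+2)).1 (t+1) = (u (t+1+1)).1 (t+1) := hWstab (t+1) (t+2) (by omega)
    have e3 : t + 1 + 1 = t + 2 := by omega
    rw [e3] at e1
    have e2 : (u (t+2)).1 t = (u (t+1)).1 t := hWstab t (t+2) (by omega)
    have ep : (u (t+2)).2 k = (u (k+5)).2 k := hPstab k (t+2) (by omega)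
    have := hF k t hkt (by omega) g (by rw [e1]; exact hg)
    rw [e2, ep] at this
    exact this
  · intro j
    obtain ⟨-, -, -, -, -, -, hG⟩ := (hu (j+5)).1
    have := (hG j (by omega)).1
    have e1 : (u (j+5)).1 (j+4) = (u (j+4+1)).1 (j+4) := hWstab (j+4) (j+5) (by omega)
    have e3 : j + 4 + 1 = j + 5 := by omega
    rw [e3] at e1
    rw [e1] at this
    exact this
  · intro j
    obtain ⟨-, -, -, -, -, -, hG⟩ := (hu (j+5)).1
    exact (hG j (by omega)).2.1
  · intro k j hkj
    obtain ⟨-, -, -, -, -, -, hG⟩ := (hu (j+5)).1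
    have := (hG j (by omega)).2.2 k hkj
    have ep : (u (j+5)).2 k = (u (k+5)).2 k := hPstab k (j+5) (by omega)
    have e1 : (u (j+5)).1 3 = (u (3+1)).1 3 := hWstab 3 (j+5) (by omega)
    have e3 : (3:ℕ) + 1 = 4 := by omega
    rw [e3] at e1
    rw [ep, e1] at this
    exact this

/-! ### The core argument -/

lemma core (U₀ : Set G) (hU₀ : U₀ ∈ 𝓝 (1:G))
    (h : ∀ f : G → ℝ, Continuous f → (∃ C : ℝ, ∀ x : G, |f x| ≤ C) →
      (∀ ε : ℝ, 0 < ε → ∃ V ∈ nhds (1 : G), ∀ x y : G, x * y⁻¹ ∈ V → |f x - f y| ≤ ε) →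
      (∀ ε : ℝ, 0 < ε → ∃ V ∈ nhds (1 : G), ∀ x y : G, x⁻¹ * y ∈ V → |f x - f y| ≤ ε))
    (hbad : ∀ W ∈ 𝓝 (1:G), ∃ x v : G, v ∈ W ∧ x * v * x⁻¹ ∉ U₀)
    (S : ℕ → Set G) (hS : ∀ n, S n ∈ 𝓝 (1:G))
    (hK7 : ∀ V : ℕ → Set G, (∀ t, V t ∈ 𝓝 (1:G)) → (∀ t, V (t+1) ⊆ S (t+1)) →
      (∀ t, ∀ a ∈ V (t+1), ∀ b ∈ V (t+1), a * b ∈ V t) →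
      ∀ W ∈ 𝓝 (1:G), ∃ k, V k ⊆ W * {g : G | ∀ m, g ∈ V m}) : False := by
  obtain ⟨V, x, v, hVn, hsym, hcube, hVS, hV1U, hconj, hvV, hbadp, hsep⟩ :=
    exists_seq U₀ hU₀ hbad S hS
  have hone : ∀ m, (1:G) ∈ V m := fun m => mem_of_mem_nhds (hVn m)
  have hmono1 : ∀ t, V (t+1) ⊆ V t := by
    intro t g hg
    have := hcube t g hg 1 (hone _) 1 (hone _)
    simpa using this
  have hmono : ∀ a b : ℕ, a ≤ b → V b ⊆ V a := by
    intro a b hab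
    induction hab with
    | refl => exact subset_rfl
    | step h ih => exact fun g hg => ih (hmono1 _ hg)
  -- badness in phi
  have hbadphi : ∀ j, (2:NNReal)⁻¹ ≤ phi V (x j * v j * (x j)⁻¹) := by
    intro j
    by_contra hlt
    push_neg at hlt
    have hmem : x j * v j * (x j)⁻¹ ∈ V 2 :=
      mem_of_phi_lt V hmono (m := 1) (by simpa [pow_one] using hlt)
    exact hbadp j (hV1U (hmono1 1 hmem))
  have quad4 : ∀ p q r s : G,
      phi V (p * s⁻¹) ≤ 2 * max (phi V (p * q⁻¹)) (max (phi V (q * r⁻¹)) (phi V (r * s⁻¹))) := by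
    intro p q r s
    have e : p * s⁻¹ = (p * q⁻¹) * (q * r⁻¹) * (r * s⁻¹) := by group
    rw [e]
    exact phi_quad V hmono hcube _ _ _
  have heighth : ((2:NNReal)⁻¹) ^ 3 = 8⁻¹ := by
    rw [← NNReal.coe_inj]; push_cast; norm_num
  have maxlem : ∀ a e T : NNReal, 2⁻¹ ≤ a → a ≤ 2 * max T (max e T) → e ≤ 8⁻¹ → 4⁻¹ ≤ T := by
    intro a e T ha hq he
    by_contra hT
    push_neg at hT
    have h1 := NNReal.coe_le_coe.2 hq
    have h2 := NNReal.coe_le_coe.2 he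
    have h3 := NNReal.coe_le_coe.2 ha
    have h4 := NNReal.coe_lt_coe.2 hT
    push_cast at h1 h2 h3 h4
    have hm : max (T:ℝ) (max (e:ℝ) (T:ℝ)) < 4⁻¹ := by
      apply max_lt h4 (max_lt _ h4)
      linarith
    have hcontr : ((2:NNReal)⁻¹ : ℝ) > (a : ℝ) := by
      push_cast
      linarith
    push_cast at hcontr
    linarith
  have hsepphi : ∀ j m, (4:NNReal)⁻¹ ≤ phi V ((x j * v j) * (x m)⁻¹) := by
    intro j m
    rcases lt_trichotomy m j with hmj | rfl | hjm
    · have hq := quad4 (x j * v j) (x m) (x m * (v j)⁻¹) (x j)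
      have e2 : (x m) * (x m * (v j)⁻¹)⁻¹ = x m * v j * (x m)⁻¹ := by group
      have e3 : (x m * (v j)⁻¹) * (x j)⁻¹ = ((x j * v j) * (x m)⁻¹)⁻¹ := by group
      rw [e2, e3, phi_inv V hsym] at hq
      have hmid : phi V (x m * v j * (x m)⁻¹) ≤ 8⁻¹ := by
        rw [← heighth]
        exact phi_le_pow V (hsep m j hmj).1
      exact maxlem _ _ _ (hbadphi j) hq hmid
    · refine le_trans ?_ (hbadphi m)
      rw [← NNReal.coe_le_coe]; push_cast; norm_num
    · have hq := quad4 (x m) (x j * v j) (x j * v j * v m) (x m * v m)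
      have e0 : (x m) * (x m * v m)⁻¹ = (x m * v m * (x m)⁻¹)⁻¹ := by group
      have e1 : (x m) * (x j * v j)⁻¹ = ((x j * v j) * (x m)⁻¹)⁻¹ := by group
      have e2 : (x j * v j) * (x j * v j * v m)⁻¹ = ((x j * v j) * v m * (x j * v j)⁻¹)⁻¹ := by
        group
      have e3 : (x j * v j * v m) * (x m * v m)⁻¹ = (x j * v j) * (x m)⁻¹ := by group
      rw [e0, e1, e2, e3, phi_inv V hsym, phi_inv V hsym, phi_inv V hsym] at hq
      have hmid : phi V ((x j * v j) * v m * (x j * v j)⁻¹) ≤ 8⁻¹ := by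
        rw [← heighth]
        exact phi_le_pow V (hsep j m hjm).2
      exact maxlem _ _ _ (hbadphi m) hq hmid
  -- the pseudometric
  set δ : G → G → ℝ := fun a b => @dist G (pmet V hone hsym).toDist a b with hδdef
  have hδtri : ∀ a b c : G, δ a c ≤ δ a b + δ b c := fun a b c =>
    @dist_triangle G (pmet V hone hsym) a b c
  have hδcomm : ∀ a b : G, δ a b = δ b a := fun a b => @dist_comm G (pmet V hone hsym) a b
  have hδself : ∀ a : G, δ a a = 0 := fun a => @dist_self G (pmet V hone hsym) a
  have hδ0 : ∀ a b : G, 0 ≤ δ a b := fun a b => @dist_nonneg G (pmet V hone hsym) a b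
  have hδle : ∀ a b : G, δ a b ≤ ((phi V (a * b⁻¹) : NNReal) : ℝ) := fun a b =>
    pmet_dist_le V hone hsym a b
  have hδge : ∀ a b : G, ((phi V (a * b⁻¹) : NNReal) : ℝ) ≤ 2 * δ a b := fun a b =>
    pmet_le_dist V hone hsym hmono hcube a b
  have hδsep : ∀ j m : ℕ, (8:ℝ)⁻¹ ≤ δ (x j * v j) (x m) := by
    intro j m
    have h1 : ((4:NNReal)⁻¹ : ℝ) ≤ ((phi V ((x j * v j) * (x m)⁻¹) : NNReal) : ℝ) :=
      NNReal.coe_le_coe.2 (hsepphi j m)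
    have h2 := hδge (x j * v j) (x m)
    have h3 : ((4:NNReal)⁻¹ : ℝ) = (4:ℝ)⁻¹ := by push_cast; norm_num
    rw [h3] at h1
    linarith
  set N : Set G := {g : G | ∀ m, g ∈ V m} with hNdef
  have hker : ∀ (j : ℕ) (η : G), η ∈ N → phi V ((x j * v j) * η * (x j * v j)⁻¹) = 0 := by
    intro j η hη
    refine phi_eq_zero V hmono (t₀ := j + 4) ?_
    intro t hts
    exact (hconj j t hts η (hη (t+1))).2
  -- the function f
  set bump : ℕ → G → ℝ := fun n g => max 0 (1 - 16 * δ g (x n)) with hbumpdef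
  set f : G → ℝ := fun g => ⨆ n, bump n g with hfdef
  have hbump01 : ∀ n g, 0 ≤ bump n g ∧ bump n g ≤ 1 := by
    intro n g
    refine ⟨le_max_left _ _, ?_⟩
    apply max_le (by norm_num)
    have := hδ0 g (x n); linarith
  have hbdd : ∀ g, BddAbove (Set.range fun n => bump n g) := by
    intro g; exact ⟨1, by rintro _ ⟨n, rfl⟩; exact (hbump01 n g).2⟩
  have hf01 : ∀ g, 0 ≤ f g ∧ f g ≤ 1 := by
    intro g
    constructor
    · exact le_trans (hbump01 0 g).1 (le_ciSup (hbdd g) 0)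
    · exact ciSup_le fun n => (hbump01 n g).2
  have hbumplip : ∀ (n : ℕ) (g g' : G), bump n g ≤ bump n g' + 16 * δ g g' := by
    intro n g g'
    have htri : δ g' (x n) ≤ δ g' g + δ g (x n) := hδtri _ _ _
    have hcm : δ g' g = δ g g' := hδcomm _ _
    have h16 : (0:ℝ) ≤ 16 * δ g g' := by have := hδ0 g g'; linarith
    apply max_le
    · have := (hbump01 n g').1; linarith
    · have hkey : 1 - 16 * δ g (x n) ≤ (1 - 16 * δ g' (x n)) + 16 * δ g g' := by
        rw [hcm] at htri; linarith
      calc 1 - 16 * δ g (x n) ≤ (1 - 16 * δ g' (x n)) + 16 * δ g g' := hkey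
      _ ≤ max 0 (1 - 16 * δ g' (x n)) + 16 * δ g g' :=
          add_le_add_left (le_max_right _ _) _
  have hflip : ∀ g g' : G, f g ≤ f g' + 16 * δ g g' := by
    intro g g'
    refine ciSup_le fun n => ?_
    calc bump n g ≤ bump n g' + 16 * δ g g' := hbumplip n g g'
    _ ≤ f g' + 16 * δ g g' := by
        have := le_ciSup (hbdd g') n; linarith
  have habs : ∀ g g' : G, |f g - f g'| ≤ 16 * δ g g' := by
    intro g g'
    rw [abs_sub_le_iff]
    constructor
    · have := hflip g g'; linarith
    · have := hflip g' g; rw [hδcomm g' g] at this; linarith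
  have hfx : ∀ k, f (x k) = 1 := by
    intro k
    refine le_antisymm (hf01 (x k)).2 ?_
    have hb : bump k (x k) = 1 := by
      have hz : δ (x k) (x k) = 0 := hδself _
      simp only [hbumpdef, hz]
      norm_num
    calc (1:ℝ) = bump k (x k) := hb.symm
    _ ≤ f (x k) := le_ciSup (hbdd (x k)) k
  have hfy : ∀ (j : ℕ) (η : G), η ∈ N → f (x j * v j * η) = 0 := by
    intro j η hη
    have hz : phi V ((x j * v j * η) * (x j * v j)⁻¹) = 0 := by
      have e : (x j * v j * η) * (x j * v j)⁻¹ = (x j * v j) * η * (x j * v j)⁻¹ := by group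
      rw [e]; exact hker j η hη
    have hδz : δ (x j * v j * η) (x j * v j) ≤ 0 := by
      have := hδle (x j * v j * η) (x j * v j)
      rw [hz] at this; simpa using this
    have hδsep' : ∀ m, (8:ℝ)⁻¹ ≤ δ (x j * v j * η) (x m) := by
      intro m
      have h1 := hδsep j m
      have htri := hδtri (x j * v j) (x j * v j * η) (x m)
      have hc : δ (x j * v j) (x j * v j * η) = δ (x j * v j * η) (x j * v j) := hδcomm _ _
      linarith
    have hzero : ∀ n, bump n (x j * v j * η) = 0 := by
      intro n
      have h1 := hδsep' n
      apply max_eq_left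
      linarith
    have : (fun n => bump n (x j * v j * η)) = fun _ => (0:ℝ) := funext hzero
    show (⨆ n, bump n (x j * v j * η)) = 0
    rw [this]
    exact ciSup_const
  have hφsmall : ∀ ε : ℝ, 0 < ε → ∃ m : ℕ, 16 * (((2:NNReal)⁻¹ ^ m : NNReal) : ℝ) < ε := by
    intro ε hε
    obtain ⟨m, hm⟩ := exists_pow_lt_of_lt_one (x := ε / 16) (y := (2:ℝ)⁻¹)
      (by linarith) (by norm_num)
    refine ⟨m, ?_⟩
    have hc : (((2:NNReal)⁻¹ ^ m : NNReal) : ℝ) = (2:ℝ)⁻¹ ^ m := by push_cast; ring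
    rw [hc]; linarith
  have hfar : ∀ (a b : G) (m : ℕ), a * b⁻¹ ∈ V m →
      |f a - f b| ≤ 16 * (((2:NNReal)⁻¹ ^ m : NNReal) : ℝ) := by
    intro a b m hab
    have h1 := habs a b
    have h2 := hδle a b
    have h3 : ((phi V (a * b⁻¹) : NNReal) : ℝ) ≤ (((2:NNReal)⁻¹ ^ m : NNReal) : ℝ) :=
      NNReal.coe_le_coe.2 (phi_le_pow V hab)
    linarith
  have hball : ∀ (g₀ : G) (m : ℕ), {g : G | g * g₀⁻¹ ∈ V m} ∈ 𝓝 g₀ := by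
    intro g₀ m
    have hc : ContinuousAt (fun g : G => g * g₀⁻¹) g₀ :=
      (continuous_id.mul continuous_const).continuousAt
    exact hc.preimage_mem_nhds (by simpa using hVn m)
  have hcont : Continuous f := by
    rw [continuous_iff_continuousAt]
    intro g₀
    unfold ContinuousAt
    rw [Metric.tendsto_nhds]
    intro ε hε
    obtain ⟨m, hm⟩ := hφsmall ε hε
    filter_upwards [hball g₀ m] with g hg
    have := hfar g g₀ m hg
    rw [Real.dist_eq]
    linarith
  have hboundf : ∃ C : ℝ, ∀ g : G, |f g| ≤ C :=
    ⟨1, fun g => abs_le.2 ⟨by linarith [(hf01 g).1], (hf01 g).2⟩⟩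
  have hRUC : ∀ ε : ℝ, 0 < ε → ∃ W ∈ 𝓝 (1:G), ∀ a b : G, a * b⁻¹ ∈ W → |f a - f b| ≤ ε := by
    intro ε hε
    obtain ⟨m, hm⟩ := hφsmall ε hε
    exact ⟨V m, hVn m, fun a b hab => le_trans (hfar a b m hab) (le_of_lt hm)⟩
  obtain ⟨W, hW, hp⟩ := h f hcont hboundf hRUC (1/2) (by norm_num)
  obtain ⟨k, hk⟩ := hK7 V hVn hVS
    (fun t a ha b hb => by simpa using hcube t a ha b hb 1 (hone _)) W hW
  have hvk : v k ∈ W * N := hk (hmono k (k+4) (by omega) (hvV k))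
  obtain ⟨w, hw, η, hη, hwη⟩ := hvk
  have hyw : x k * w = x k * v k * η⁻¹ := by rw [← hwη]; group
  have hfw : f (x k * w) = 0 := by
    rw [hyw]; exact hfy k η⁻¹ (fun m => hsym m η (hη m))
  have hpair := hp (x k) (x k * w) (by simpa using hw)
  rw [hfx k, hfw] at hpair
  norm_num at hpair

end SINaux

/-- a Hausdorff topological group that is locally compact or metrizable,
and on which every bounded continuous right uniformly continuous real function is left
uniformly continuous, is a SIN group. -/
theorem sin_of_luc_subset_ruc (G : Type*) [Group G] [TopologicalSpace G]
    [IsTopologicalGroup G] [T2Space G]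
    (hspace : LocallyCompactSpace G ∨ TopologicalSpace.MetrizableSpace G)
    (h : ∀ f : G → ℝ, Continuous f → (∃ C : ℝ, ∀ x : G, |f x| ≤ C) →
      (∀ ε : ℝ, 0 < ε → ∃ V ∈ nhds (1 : G), ∀ x y : G, x * y⁻¹ ∈ V → |f x - f y| ≤ ε) →
      (∀ ε : ℝ, 0 < ε → ∃ V ∈ nhds (1 : G), ∀ x y : G, x⁻¹ * y ∈ V → |f x - f y| ≤ ε)) :
    ∀ U ∈ nhds (1 : G), ∃ V ∈ nhds (1 : G), ∀ x : G, ∀ v ∈ V, x * v * x⁻¹ ∈ U := by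
  intro U hU
  by_contra hcon
  push_neg at hcon
  have hbad : ∀ W ∈ nhds (1:G), ∃ x v : G, v ∈ W ∧ x * v * x⁻¹ ∉ U := by
    intro W hW
    obtain ⟨xx, vv, hv1, hv2⟩ := hcon W hW
    exact ⟨xx, vv, hv1, hv2⟩
  rcases hspace with hLC | hM
  · obtain ⟨K₀, hK₀c, hK₀n⟩ := exists_compact_mem_nhds (1:G)
    refine SINaux.core U hU h hbad (fun _ => K₀) (fun _ => hK₀n) ?_
    intro V hVn hVS hVsq W hW
    set N := {g : G | ∀ m, g ∈ V m} with hNdef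
    have hone : ∀ m, (1:G) ∈ V m := fun m => mem_of_mem_nhds (hVn m)
    have hNone : (1:G) ∈ N := fun m => hone m
    have hWo : interior W ∈ nhds (1:G) := interior_mem_nhds.2 hW
    have hO : IsOpen (interior W * N) := isOpen_interior.mul_right
    have hNsubO : N ⊆ interior W * N := fun η hη =>
      ⟨1, mem_of_mem_nhds hWo, η, hη, one_mul η⟩
    set C : ℕ → Set G := fun k => closure (V (k+1)) ∩ (interior W * N)ᶜ with hCdef
    have hCcl : ∀ k, IsClosed (C k) := fun k => isClosed_closure.inter hO.isClosed_compl
    have hclsub : ∀ t : ℕ, closure (V (t+1)) ⊆ V t := by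
      intro t
      calc closure (V (t+1)) ⊆ V (t+1) * V (t+1) :=
            SINaux.closure_subset_mul _ (hVn _)
      _ ⊆ V t := by rintro g ⟨a, ha, b, hb, rfl⟩; exact hVsq t a ha b hb
    have hCdec : ∀ k, C (k+1) ⊆ C k := by
      intro k g hg
      exact ⟨subset_closure (hclsub (k+1) hg.1), hg.2⟩
    have hCcomp : IsCompact (C 0) := by
      have hsub : C 0 ⊆ K₀ := by
        intro g hg
        have h1 : closure (V 1) ⊆ closure K₀ := closure_mono (hVS 0)
        have h2 : closure K₀ = K₀ := hK₀c.isClosed.closure_eq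
        exact h2 ▸ h1 hg.1
      exact hK₀c.of_isClosed_subset (hCcl 0) hsub
    have hCempty : (⋂ k, C k) = ∅ := by
      rw [Set.eq_empty_iff_forall_notMem]
      intro g hg
      simp only [Set.mem_iInter] at hg
      have hgN : g ∈ N := by
        intro m
        exact hclsub m (hg m).1
      exact (hg 0).2 (hNsubO hgN)
    have hnotall : ¬ (∀ k, (C k).Nonempty) := by
      intro hne
      have := IsCompact.nonempty_iInter_of_sequence_nonempty_isCompact_isClosed C hCdec hne hCcomp hCcl
      rw [hCempty] at this
      exact Set.not_nonempty_empty this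
    push_neg at hnotall
    obtain ⟨k, hkC⟩ := hnotall
    refine ⟨k+1, ?_⟩
    intro g hg
    have hgcl : g ∈ closure (V (k+1)) := subset_closure hg
    have hgO : g ∈ interior W * N := by
      by_contra hgo
      have : g ∈ C k := ⟨hgcl, hgo⟩
      rw [hkC] at this
      exact this
    exact Set.mul_subset_mul_right interior_subset hgO
  · haveI := hM
    obtain ⟨B, hB⟩ := (nhds (1:G)).exists_antitone_basis
    refine SINaux.core U hU h hbad B (fun n => hB.toHasBasis.mem_of_mem trivial) ?_
    intro V hVn hVS hVsq W hW
    obtain ⟨i, -, hi⟩ := hB.toHasBasis.mem_iff.1 hW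
    refine ⟨i+1, ?_⟩
    intro g hg
    have hgW : g ∈ W := hi (hB.antitone (Nat.le_succ i) (hVS i hg))
    exact ⟨g, hgW, 1, fun m => mem_of_mem_nhds (hVn m), mul_one g⟩
end
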